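/- arXiv:2605.17972 — 5 statements merged into one kernel-verified Lean document; each statement's English description precedes it below -/
import Mathlib

section
/- Let x = I + P and y = I + Q be elements of SL₂(R_e) such that all entries of P lie in ϖ^{j−1}R_e and all entries of Q lie in ϖ^{k−1}R_e, for some integers j, k ≥ 2. Then the group commutator (x,y) = xyx^{−1}y^{−1} satisfies (x,y) − I = [P,Q] + tr(P)tr(Q)·I + Θ, where [P,Q] = PQ − QP and Θ ∈ M₂(R_e) has all entries in ϖ^{j+k+min(j,k)−3}R_e. In particular, if j + k − 1 ≤ e, then all entries of (x,y) − I − [P,Q] lie in ϖ^{j+k−1}R_e (equivalently (x,y) ≡ I + [P,Q] mod ϖ^{j+k−1}), so (x,y) reduces to the identity in SL₂(O_K/𝔭^{j+k−2}). -/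
set_option synthInstance.maxHeartbeats 400000
set_option maxHeartbeats 1000000

noncomputable section

namespace Paper

/-- The unipotent upper-triangular subgroup `U = {[[1,x],[0,1]]}` of `SL₂(R)`. -/
def unipotent (R : Type*) [CommRing R] : Subgroup (Matrix.SpecialLinearGroup (Fin 2) R) where
  carrier := {g | g.1 0 0 = 1 ∧ g.1 1 0 = 0 ∧ g.1 1 1 = 1}
  one_mem' := by
    refine ⟨?_, ?_, ?_⟩ <;> simp [Matrix.SpecialLinearGroup.coe_one, Matrix.one_apply]
  mul_mem' := by
    rintro a b ⟨ha1, ha2, ha3⟩ ⟨hb1, hb2, hb3⟩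
    refine ⟨?_, ?_, ?_⟩ <;>
      simp [Matrix.SpecialLinearGroup.coe_mul, Matrix.mul_apply, Fin.sum_univ_two,
        ha1, ha2, ha3, hb1, hb2, hb3]
  inv_mem' := by
    rintro a ⟨h1, h2, h3⟩
    refine ⟨?_, ?_, ?_⟩ <;>
      simp [Matrix.SpecialLinearGroup.coe_inv, Matrix.adjugate_fin_two, h1, h2, h3]

/-- `χ(H) = |H\(G/U)| / [G:H]` for `G = SL₂(R)` acting on `X = G/U`,
`U` the unipotent subgroup: the number of `H`-orbits on `X` divided by the index of `H`. -/
def chi (R : Type*) [CommRing R] (H : Subgroup (Matrix.SpecialLinearGroup (Fin 2) R)) : ℝ :=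
  (Nat.card (Quotient (MulAction.orbitRel H
      (Matrix.SpecialLinearGroup (Fin 2) R ⧸ unipotent R))) : ℝ) / (H.index : ℝ)

variable (K : Type*) [Field K] [NumberField K]

/-- The reduction map `SL₂(𝓞_K/𝔭^e) → SL₂(𝓞_K/𝔭^j)` for `j ≤ e`. -/
def red (𝔭 : Ideal (NumberField.RingOfIntegers K)) (e j : ℕ) (h : j ≤ e) :
    Matrix.SpecialLinearGroup (Fin 2) (NumberField.RingOfIntegers K ⧸ 𝔭 ^ e) →*
      Matrix.SpecialLinearGroup (Fin 2) (NumberField.RingOfIntegers K ⧸ 𝔭 ^ j) :=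
  Matrix.SpecialLinearGroup.map (Ideal.Quotient.factor (S := 𝔭 ^ e) (T := 𝔭 ^ j) (Ideal.pow_le_pow_right h))

/-- A subgroup `H ⊆ SL₂(𝓞_K/𝔭^e)` has exact level `e`:
`H ≠ ρ_{e,e-1}⁻¹(ρ_{e,e-1}(H))` when `e > 1`, and `H ≠ G₁` when `e = 1`. -/
def ExactLevel (𝔭 : Ideal (NumberField.RingOfIntegers K)) (e : ℕ)
    (H : Subgroup (Matrix.SpecialLinearGroup (Fin 2) (NumberField.RingOfIntegers K ⧸ 𝔭 ^ e))) :
    Prop :=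
  if e = 1 then H ≠ ⊤
  else H ≠ Subgroup.comap (red K 𝔭 e (e - 1) (Nat.sub_le e 1))
    (Subgroup.map (red K 𝔭 e (e - 1) (Nat.sub_le e 1)) H)

end Paper

open Paper

set_option maxHeartbeats 8000000
set_option synthInstance.maxHeartbeats 2000000

section Aux
variable {R : Type*} [CommRing R]

lemma adj_fin_two (M : Matrix (Fin 2) (Fin 2) R) :
    M.adjugate = M.trace • (1 : Matrix (Fin 2) (Fin 2) R) - M := by
  rw [Matrix.eta_fin_two M, Matrix.adjugate_fin_two]
  ext a b
  fin_cases a <;> fin_cases b <;>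
    simp [Matrix.trace_fin_two, Matrix.one_apply]

lemma det_one_add (P : Matrix (Fin 2) (Fin 2) R) :
    (1 + P).det = 1 + P.trace + P.det := by
  simp [Matrix.det_fin_two, Matrix.trace_fin_two, Matrix.add_apply, Matrix.one_apply]
  ring

lemma entry_mul_mem {I : Ideal R} {m n : ℕ} {A B : Matrix (Fin 2) (Fin 2) R}
    (hA : ∀ a b, A a b ∈ I ^ m) (hB : ∀ a b, B a b ∈ I ^ n) :
    ∀ a b, (A * B) a b ∈ I ^ (m + n) := by
  intro a b
  rw [Matrix.mul_apply, Fin.sum_univ_two, pow_add]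
  exact add_mem (Ideal.mul_mem_mul (hA a 0) (hB 0 b)) (Ideal.mul_mem_mul (hA a 1) (hB 1 b))

lemma trace_mem {I : Ideal R} {m : ℕ} {A : Matrix (Fin 2) (Fin 2) R}
    (hA : ∀ a b, A a b ∈ I ^ m) : A.trace ∈ I ^ m := by
  rw [Matrix.trace_fin_two]; exact add_mem (hA 0 0) (hA 1 1)

lemma det_mem {I : Ideal R} {m : ℕ} {A : Matrix (Fin 2) (Fin 2) R}
    (hA : ∀ a b, A a b ∈ I ^ m) : A.det ∈ I ^ (m + m) := by
  rw [Matrix.det_fin_two, pow_add]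
  exact sub_mem (Ideal.mul_mem_mul (hA 0 0) (hA 1 1)) (Ideal.mul_mem_mul (hA 0 1) (hA 1 0))

lemma entry_smul_one_mem {I : Ideal R} {m : ℕ} {t : R} (ht : t ∈ I ^ m) :
    ∀ a b : Fin 2, (t • (1 : Matrix (Fin 2) (Fin 2) R)) a b ∈ I ^ m := by
  intro a b
  rw [Matrix.smul_apply, smul_eq_mul]
  exact Ideal.mul_mem_right _ _ ht

lemma expansion (P Q : Matrix (Fin 2) (Fin 2) R) :
    (1 + P) * (1 + Q) * (1 + (P.trace • 1 - P)) * (1 + (Q.trace • 1 - Q)) - 1 =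
      (P * Q - Q * P) + (P.trace * Q.trace) • (1 : Matrix (Fin 2) (Fin 2) R)
        + (P * Q * (P.trace • 1 - P) + P * Q * (Q.trace • 1 - Q)
            + P * (P.trace • 1 - P) * (Q.trace • 1 - Q)
            + Q * (P.trace • 1 - P) * (Q.trace • 1 - Q)
            + P * Q * (P.trace • 1 - P) * (Q.trace • 1 - Q))
        + (P.trace + P.det + (Q.trace + Q.det)) • 1 := by
  ext a b
  fin_cases a <;> fin_cases b <;>
    simp [Matrix.mul_apply, Fin.sum_univ_two, Matrix.trace_fin_two, Matrix.det_fin_two,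
      Matrix.one_apply, Matrix.add_apply, Matrix.sub_apply, Matrix.smul_apply, smul_eq_mul] <;>
    ring

end Aux

/-- Lemma `lie-bracket-ring`.
Let `x = I + P`, `y = I + Q` in `SL₂(R_e)` with the entries of `P` (resp. `Q`)
in `ϖ^{j-1}R_e` (resp. `ϖ^{k-1}R_e`), `j,k ≥ 2`.  Then
`(x,y) - I = [P,Q] + tr(P)tr(Q)·I + Θ` with the entries of `Θ` in
`ϖ^{j+k+min(j,k)-3}R_e`; and if `j+k-1 ≤ e` then `(x,y) ≡ I + [P,Q] (mod ϖ^{j+k-1})`,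
so `(x,y)` reduces to the identity in `SL₂(𝓞_K/𝔭^{j+k-2})`. -/
theorem statement7 (K : Type*) [Field K] [NumberField K]
    (𝔭 : Ideal (NumberField.RingOfIntegers K)) (hprime : 𝔭.IsPrime) (hbot : 𝔭 ≠ ⊥)
    (e j k : ℕ) (he : 1 ≤ e) (hj : 2 ≤ j) (hk : 2 ≤ k)
    (x y : Matrix.SpecialLinearGroup (Fin 2) (NumberField.RingOfIntegers K ⧸ 𝔭 ^ e))
    (P Q : Matrix (Fin 2) (Fin 2) (NumberField.RingOfIntegers K ⧸ 𝔭 ^ e))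
    (hx : x.1 = 1 + P) (hy : y.1 = 1 + Q)
    (hP : ∀ a b, P a b ∈ (Ideal.map (Ideal.Quotient.mk (𝔭 ^ e)) 𝔭) ^ (j - 1))
    (hQ : ∀ a b, Q a b ∈ (Ideal.map (Ideal.Quotient.mk (𝔭 ^ e)) 𝔭) ^ (k - 1)) :
    (∃ Θ : Matrix (Fin 2) (Fin 2) (NumberField.RingOfIntegers K ⧸ 𝔭 ^ e),
      (x * y * x⁻¹ * y⁻¹).1 - 1 =
          (P * Q - Q * P) + (Matrix.trace P * Matrix.trace Q) • (1 : Matrix (Fin 2) (Fin 2) _)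
            + Θ ∧
      ∀ a b, Θ a b ∈ (Ideal.map (Ideal.Quotient.mk (𝔭 ^ e)) 𝔭) ^ (j + k + min j k - 3)) ∧
    (∀ _h : j + k - 1 ≤ e,
      (∀ a b, ((x * y * x⁻¹ * y⁻¹).1 - 1 - (P * Q - Q * P)) a b ∈
          (Ideal.map (Ideal.Quotient.mk (𝔭 ^ e)) 𝔭) ^ (j + k - 1)) ∧
      red K 𝔭 e (j + k - 2) (by omega) (x * y * x⁻¹ * y⁻¹) = 1) := by
  classical
  set I : Ideal (NumberField.RingOfIntegers K ⧸ 𝔭 ^ e) :=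
    Ideal.map (Ideal.Quotient.mk (𝔭 ^ e)) 𝔭 with hIdef
  set P' : Matrix (Fin 2) (Fin 2) (NumberField.RingOfIntegers K ⧸ 𝔭 ^ e) :=
    P.trace • 1 - P with hP'def
  set Q' : Matrix (Fin 2) (Fin 2) (NumberField.RingOfIntegers K ⧸ 𝔭 ^ e) :=
    Q.trace • 1 - Q with hQ'def
  have hxinv : (x⁻¹).1 = 1 + P' := by
    rw [Matrix.SpecialLinearGroup.coe_inv, hx, adj_fin_two, hP'def]
    rw [Matrix.trace_add, Matrix.trace_one]
    ext a b
    simp [Matrix.add_apply, Matrix.sub_apply, Matrix.smul_apply, Matrix.one_apply, smul_eq_mul]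
    split_ifs <;> ring
  have hyinv : (y⁻¹).1 = 1 + Q' := by
    rw [Matrix.SpecialLinearGroup.coe_inv, hy, adj_fin_two, hQ'def]
    rw [Matrix.trace_add, Matrix.trace_one]
    ext a b
    simp [Matrix.add_apply, Matrix.sub_apply, Matrix.smul_apply, Matrix.one_apply, smul_eq_mul]
    split_ifs <;> ring
  have hdP : P.trace + P.det = 0 := by
    have h1 : (1 + P).det = 1 := by rw [← hx]; exact x.2
    rw [det_one_add] at h1
    linear_combination h1
  have hdQ : Q.trace + Q.det = 0 := by
    have h1 : (1 + Q).det = 1 := by rw [← hy]; exact y.2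
    rw [det_one_add] at h1
    linear_combination h1
  set Θ : Matrix (Fin 2) (Fin 2) (NumberField.RingOfIntegers K ⧸ 𝔭 ^ e) :=
    P * Q * P' + P * Q * Q' + P * P' * Q' + Q * P' * Q' + P * Q * P' * Q' with hΘdef
  have hc : (x * y * x⁻¹ * y⁻¹).1 = (1 + P) * (1 + Q) * (1 + P') * (1 + Q') := by
    simp only [Matrix.SpecialLinearGroup.coe_mul, hx, hy, hxinv, hyinv]
  have key : (x * y * x⁻¹ * y⁻¹).1 - 1 =
      (P * Q - Q * P) + (P.trace * Q.trace) • 1 + Θ := by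
    rw [hc, hP'def, hQ'def, expansion, hdP, hdQ]
    simp [hΘdef, hP'def, hQ'def]
  have hP'mem : ∀ a b, P' a b ∈ I ^ (j - 1) := fun a b =>
    sub_mem (entry_smul_one_mem (trace_mem hP) a b) (hP a b)
  have hQ'mem : ∀ a b, Q' a b ∈ I ^ (k - 1) := fun a b =>
    sub_mem (entry_smul_one_mem (trace_mem hQ) a b) (hQ a b)
  have htrP : P.trace ∈ I ^ (j - 1 + (j - 1)) := by
    have h2 : P.trace = -P.det := by linear_combination hdP
    rw [h2]
    exact neg_mem (det_mem hP)
  have htrQ : Q.trace ∈ I ^ (k - 1 + (k - 1)) := by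
    have h2 : Q.trace = -Q.det := by linear_combination hdQ
    rw [h2]
    exact neg_mem (det_mem hQ)
  have hΘmem : ∀ m, m ≤ j + k + min j k - 3 → ∀ a b, Θ a b ∈ I ^ m := by
    intro m hm a b
    rw [hΘdef]
    simp only [Matrix.add_apply]
    refine add_mem (add_mem (add_mem (add_mem ?_ ?_) ?_) ?_) ?_
    · exact Ideal.pow_le_pow_right (by omega)
        (entry_mul_mem (entry_mul_mem hP hQ) hP'mem a b)
    · exact Ideal.pow_le_pow_right (by omega)
        (entry_mul_mem (entry_mul_mem hP hQ) hQ'mem a b)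
    · exact Ideal.pow_le_pow_right (by omega)
        (entry_mul_mem (entry_mul_mem hP hP'mem) hQ'mem a b)
    · exact Ideal.pow_le_pow_right (by omega)
        (entry_mul_mem (entry_mul_mem hQ hP'mem) hQ'mem a b)
    · exact Ideal.pow_le_pow_right (by omega)
        (entry_mul_mem (entry_mul_mem (entry_mul_mem hP hQ) hP'mem) hQ'mem a b)
  have htt : ∀ m, m ≤ 2 * j + k - 3 → P.trace * Q.trace ∈ I ^ m := by
    intro m hm
    have h0 : P.trace * Q.trace ∈ I ^ (j - 1 + (j - 1) + (k - 1)) := by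
      rw [pow_add]
      exact Ideal.mul_mem_mul htrP (trace_mem hQ)
    exact Ideal.pow_le_pow_right (by omega) h0
  refine ⟨⟨Θ, key, hΘmem _ le_rfl⟩, fun _h => ⟨?_, ?_⟩⟩
  · intro a b
    have heq : (x * y * x⁻¹ * y⁻¹).1 - 1 - (P * Q - Q * P) =
        (P.trace * Q.trace) • 1 + Θ := by
      rw [key]; abel
    rw [heq]
    simp only [Matrix.add_apply]
    exact add_mem (entry_smul_one_mem (htt _ (by omega)) a b) (hΘmem _ (by omega) a b)
  · have hent : ∀ a b, ((x * y * x⁻¹ * y⁻¹).1 - 1) a b ∈ I ^ (j + k - 2) := by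
      intro a b
      rw [key]
      simp only [Matrix.add_apply, Matrix.sub_apply]
      refine add_mem (add_mem (sub_mem ?_ ?_) ?_) (hΘmem _ (by omega) a b)
      · exact Ideal.pow_le_pow_right (by omega) (entry_mul_mem hP hQ a b)
      · exact Ideal.pow_le_pow_right (by omega) (entry_mul_mem hQ hP a b)
      · exact entry_smul_one_mem (htt _ (by omega)) a b
    have hker : ∀ c : NumberField.RingOfIntegers K ⧸ 𝔭 ^ e, c ∈ I ^ (j + k - 2) →
        Ideal.Quotient.factor (S := 𝔭 ^ e) (T := 𝔭 ^ (j + k - 2))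
          (Ideal.pow_le_pow_right (by omega)) c = 0 := by
      intro c hc
      rw [hIdef, ← Ideal.map_pow] at hc
      obtain ⟨a, ha, rfl⟩ :=
        (Ideal.mem_map_iff_of_surjective _ Ideal.Quotient.mk_surjective).mp hc
      rw [Ideal.Quotient.factor_mk]
      exact Ideal.Quotient.eq_zero_iff_mem.mpr ha
    refine Matrix.SpecialLinearGroup.ext _ _ fun a b => ?_
    show Ideal.Quotient.factor (S := 𝔭 ^ e) (T := 𝔭 ^ (j + k - 2))
        (Ideal.pow_le_pow_right (by omega)) ((x * y * x⁻¹ * y⁻¹).1 a b) =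
        (1 : Matrix (Fin 2) (Fin 2) (NumberField.RingOfIntegers K ⧸ 𝔭 ^ (j + k - 2))) a b
    have hsplit : (x * y * x⁻¹ * y⁻¹).1 a b =
        (1 : Matrix (Fin 2) (Fin 2) _) a b + ((x * y * x⁻¹ * y⁻¹).1 - 1) a b := by
      simp [Matrix.sub_apply]
    rw [hsplit, map_add, hker _ (hent a b), add_zero]
    by_cases hab : a = b <;> simp [Matrix.one_apply, hab]
end
end

section
/- Let H ⊆ G_e be a subgroup and let j, k ≥ 2 be integers with j + k − 1 ≤ e. Then for all A ∈ W_j(H) and B ∈ W_k(H), the Lie bracket [A,B] = AB − BA belongs to W_{j+k−1}(H); that is, [W_j(H), W_k(H)] ⊆ W_{j+k−1}(H). -/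
set_option synthInstance.maxHeartbeats 400000
set_option maxHeartbeats 1000000

noncomputable section

open Paper

namespace Paper

/-- The Lie image at level `j` of a subgroup `H ⊆ SL₂(𝓞_K/𝔭^e)`:
`W_j(H) = {A ∈ sl₂(F_q) | ∃ n ∈ N_j(H), n ≡ I + ϖ^{j-1}Alift (mod ϖ^j), Alift ≡ A (mod ϖ)}`,
where `N_j(H) = ker (ρ_{e,j-1}|_H)` and `ϖ` is a uniformizer of `𝔭`. -/
def Wset (K : Type*) [Field K] [NumberField K]
    (𝔭 : Ideal (NumberField.RingOfIntegers K)) (ϖ : NumberField.RingOfIntegers K)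
    (e j : ℕ) (he : e ≠ 0) (hj : j - 1 ≤ e)
    (H : Subgroup (Matrix.SpecialLinearGroup (Fin 2) (NumberField.RingOfIntegers K ⧸ 𝔭 ^ e))) :
    Set (Matrix (Fin 2) (Fin 2) (NumberField.RingOfIntegers K ⧸ 𝔭)) :=
  {A | Matrix.trace A = 0 ∧
    ∃ n, n ∈ H ∧ red K 𝔭 e (j - 1) hj n = 1 ∧
      ∃ Alift : Matrix (Fin 2) (Fin 2) (NumberField.RingOfIntegers K ⧸ 𝔭 ^ e),
        (∀ a b, Ideal.Quotient.factor (S := 𝔭 ^ e) (T := 𝔭) (Ideal.pow_le_self he) (Alift a b) = A a b) ∧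
        (∀ a b, (n.1 - 1) a b - (Ideal.Quotient.mk (𝔭 ^ e) ϖ) ^ (j - 1) * Alift a b ∈
          (Ideal.map (Ideal.Quotient.mk (𝔭 ^ e)) 𝔭) ^ j)}

/-- `W_j(H)` together with the convention `W_i(H) := sl₂(F_q)` for `i ≥ e + 1`. -/
def WsetC (K : Type*) [Field K] [NumberField K]
    (𝔭 : Ideal (NumberField.RingOfIntegers K)) (ϖ : NumberField.RingOfIntegers K)
    (e i : ℕ) (he : e ≠ 0)
    (H : Subgroup (Matrix.SpecialLinearGroup (Fin 2) (NumberField.RingOfIntegers K ⧸ 𝔭 ^ e))) :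
    Set (Matrix (Fin 2) (Fin 2) (NumberField.RingOfIntegers K ⧸ 𝔭)) :=
  if h : i ≤ e then Wset K 𝔭 ϖ e i he (le_trans (Nat.sub_le i 1) h) H
  else {A | Matrix.trace A = 0}

end Paper

section Helpers

variable {R : Type*} [CommRing R]

lemma entry_mem_top (I : Ideal R) (M : Matrix (Fin 2) (Fin 2) R) :
    ∀ a b, M a b ∈ I ^ 0 := by
  intro a b; simp [Ideal.one_eq_top]

lemma entry_mem_mul (I : Ideal R) {s t r : ℕ} (h : r ≤ s + t)
    {M N : Matrix (Fin 2) (Fin 2) R}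
    (hM : ∀ a b, M a b ∈ I ^ s) (hN : ∀ a b, N a b ∈ I ^ t) :
    ∀ a b, (M * N) a b ∈ I ^ r := by
  intro a b
  apply Ideal.pow_le_pow_right h
  rw [Matrix.mul_apply, Fin.sum_univ_two, pow_add]
  exact add_mem (Ideal.mul_mem_mul (hM _ _) (hN _ _)) (Ideal.mul_mem_mul (hM _ _) (hN _ _))

lemma key_commutator (I : Ideal R) (π : R) (hπ : π ∈ I)
    (p q : ℕ) (hp : 1 ≤ p) (hq : 1 ≤ q)
    (N M u A B : Matrix (Fin 2) (Fin 2) R)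
    (hu : (M * N) * u = 1)
    (hE : ∀ a b, (N - 1) a b - π ^ p * A a b ∈ I ^ (p + 1))
    (hF : ∀ a b, (M - 1) a b - π ^ q * B a b ∈ I ^ (q + 1)) :
    ∀ a b, (N * M * u - 1) a b - π ^ (p + q) * (A * B - B * A) a b ∈ I ^ (p + q + 1) := by
  have hpi : ∀ s : ℕ, π ^ s ∈ I ^ s := fun s => Ideal.pow_mem_pow hπ s
  -- scaled lifts
  have hpA : ∀ a b, ((π ^ p) • A) a b ∈ I ^ p := by
    intro a b
    simpa using Ideal.mul_mem_right (A a b) _ (hpi p)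
  have hqB : ∀ a b, ((π ^ q) • B) a b ∈ I ^ q := by
    intro a b
    simpa using Ideal.mul_mem_right (B a b) _ (hpi q)
  have hE' : ∀ a b, ((N - 1) - (π ^ p) • A) a b ∈ I ^ (p + 1) := by
    intro a b; simpa using hE a b
  have hF' : ∀ a b, ((M - 1) - (π ^ q) • B) a b ∈ I ^ (q + 1) := by
    intro a b; simpa using hF a b
  have hX : ∀ a b, (N - 1) a b ∈ I ^ p := by
    intro a b
    have := add_mem (Ideal.pow_le_pow_right (Nat.le_succ p) (hE' a b)) (hpA a b)
    simpa using this
  have hY : ∀ a b, (M - 1) a b ∈ I ^ q := by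
    intro a b
    have := add_mem (Ideal.pow_le_pow_right (Nat.le_succ q) (hF' a b)) (hqB a b)
    simpa using this
  -- u - 1 has entries in I
  have hMN1 : ∀ a b, (1 - M * N) a b ∈ I ^ 1 := by
    have hid : (1 : Matrix (Fin 2) (Fin 2) R) - M * N
        = -((N - 1) + (M - 1) + (M - 1) * (N - 1)) := by
      ext a b
      simp only [Matrix.sub_apply, Matrix.add_apply, Matrix.neg_apply, Matrix.mul_apply,
        Matrix.one_apply, Fin.sum_univ_two]
      fin_cases a <;> fin_cases b <;> simp <;> ring
    rw [hid]
    intro a b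
    simp only [Matrix.neg_apply, Matrix.add_apply]
    refine neg_mem (add_mem (add_mem ?_ ?_) ?_)
    · exact Ideal.pow_le_pow_right hp (hX a b)
    · exact Ideal.pow_le_pow_right hq (hY a b)
    · exact entry_mem_mul I (by omega) hY hX a b
  have hW : ∀ a b, (u - 1) a b ∈ I ^ 1 := by
    have hid : u - 1 = (1 - M * N) * u := by
      rw [sub_mul, one_mul, hu]
    rw [hid]
    exact entry_mem_mul I (by omega) hMN1 (entry_mem_top I u)
  -- the main algebraic identity
  have hid : ∀ a b, (N * M * u - 1) a b - π ^ (p + q) * (A * B - B * A) a b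
      = (((π ^ p) • A) * ((M - 1) - (π ^ q) • B)
        + ((N - 1) - (π ^ p) • A) * ((π ^ q) • B)
        + ((N - 1) - (π ^ p) • A) * ((M - 1) - (π ^ q) • B)
        - ((π ^ q) • B) * ((N - 1) - (π ^ p) • A)
        - ((M - 1) - (π ^ q) • B) * ((π ^ p) • A)
        - ((M - 1) - (π ^ q) • B) * ((N - 1) - (π ^ p) • A)
        + ((N - 1) * (M - 1) - (M - 1) * (N - 1)) * (u - 1)) a b
        + ((M * N) * u - 1) a b := by
    intro a b
    simp only [Matrix.sub_apply, Matrix.add_apply, Matrix.mul_apply, Matrix.smul_apply,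
      Matrix.one_apply, Fin.sum_univ_two, smul_eq_mul, pow_add]
    fin_cases a <;> fin_cases b <;> simp <;> ring
  intro a b
  rw [hid a b]
  have hz : ((M * N) * u - 1) a b = 0 := by rw [hu]; simp
  rw [hz, add_zero]
  simp only [Matrix.add_apply, Matrix.sub_apply]
  refine add_mem (sub_mem (sub_mem (sub_mem (add_mem (add_mem ?_ ?_) ?_) ?_) ?_) ?_) ?_
  · exact entry_mem_mul I (by omega) hpA hF' a b
  · exact entry_mem_mul I (by omega) hE' hqB a b
  · exact entry_mem_mul I (by omega) hE' hF' a b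
  · exact entry_mem_mul I (by omega) hqB hE' a b
  · exact entry_mem_mul I (by omega) hF' hpA a b
  · exact entry_mem_mul I (by omega) hF' hE' a b
  · refine entry_mem_mul I (le_refl (p + q + 1)) ?_ hW a b
    intro a' b'
    rw [Matrix.sub_apply]
    exact sub_mem (entry_mem_mul I (le_refl (p + q)) hX hY a' b')
      (entry_mem_mul I (by omega) hY hX a' b')


lemma red_eq_one_iff {K : Type*} [Field K] [NumberField K]
    (𝔭 : Ideal (NumberField.RingOfIntegers K)) (e t : ℕ) (h : t ≤ e)
    (g : Matrix.SpecialLinearGroup (Fin 2) (NumberField.RingOfIntegers K ⧸ 𝔭 ^ e)) :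
    red K 𝔭 e t h g = 1 ↔
      ∀ a b, (g.1 - 1) a b ∈ (Ideal.map (Ideal.Quotient.mk (𝔭 ^ e)) 𝔭) ^ t := by
  set f := Ideal.Quotient.factor (S := 𝔭 ^ e) (T := 𝔭 ^ t) (Ideal.pow_le_pow_right h) with hf
  have hker : ∀ x : NumberField.RingOfIntegers K ⧸ 𝔭 ^ e,
      f x = 0 ↔ x ∈ (Ideal.map (Ideal.Quotient.mk (𝔭 ^ e)) 𝔭) ^ t := by
    intro x
    obtain ⟨y, rfl⟩ := Ideal.Quotient.mk_surjective x
    rw [← Ideal.map_pow, hf, Ideal.Quotient.factor_mk]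
    constructor
    · intro h0
      exact Ideal.mem_map_of_mem _ (Ideal.Quotient.eq_zero_iff_mem.mp h0)
    · intro hm
      rw [Ideal.mem_map_iff_of_surjective _ Ideal.Quotient.mk_surjective] at hm
      obtain ⟨z, hz, hzy⟩ := hm
      have hsub : z - y ∈ 𝔭 ^ e := (Ideal.Quotient.mk_eq_mk_iff_sub_mem z y).mp hzy
      have hy : y ∈ 𝔭 ^ t := by
        have : y = z - (z - y) := by ring
        rw [this]
        exact sub_mem hz (Ideal.pow_le_pow_right h hsub)
      exact Ideal.Quotient.eq_zero_iff_mem.mpr hy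
  have h1 : red K 𝔭 e t h g = 1 ↔ ∀ a b,
      f (g.1 a b) = (1 : Matrix (Fin 2) (Fin 2) (NumberField.RingOfIntegers K ⧸ 𝔭 ^ t)) a b := by
    rw [Matrix.SpecialLinearGroup.ext_iff]
    constructor
    · intro hh a b
      have := hh a b
      simpa [red, Matrix.SpecialLinearGroup.map_apply_coe, hf] using this
    · intro hh a b
      have := hh a b
      simpa [red, Matrix.SpecialLinearGroup.map_apply_coe, hf] using this
  rw [h1]
  refine forall₂_congr fun a b => ?_
  have hone : f ((1 : Matrix (Fin 2) (Fin 2) (NumberField.RingOfIntegers K ⧸ 𝔭 ^ e)) a b)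
      = (1 : Matrix (Fin 2) (Fin 2) (NumberField.RingOfIntegers K ⧸ 𝔭 ^ t)) a b := by
    simp [Matrix.one_apply, apply_ite f]
  rw [← hker, Matrix.sub_apply, map_sub, hone, sub_eq_zero]

end Helpers

/-- Lemma `lie-bracket`.
For `j, k ≥ 2` with `j + k - 1 ≤ e`, one has `[W_j(H), W_k(H)] ⊆ W_{j+k-1}(H)`. -/
theorem statement8 (K : Type*) [Field K] [NumberField K]
    (𝔭 : Ideal (NumberField.RingOfIntegers K)) (hprime : 𝔭.IsPrime) (hbot : 𝔭 ≠ ⊥)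
    (ϖ : NumberField.RingOfIntegers K) (hϖ : ϖ ∈ 𝔭) (hϖ2 : ϖ ∉ 𝔭 ^ 2)
    (e j k : ℕ) (hj : 2 ≤ j) (hk : 2 ≤ k) (hjk : j + k - 1 ≤ e)
    (H : Subgroup (Matrix.SpecialLinearGroup (Fin 2) (NumberField.RingOfIntegers K ⧸ 𝔭 ^ e))) :
    ∀ A ∈ Wset K 𝔭 ϖ e j (by omega) (by omega) H,
      ∀ B ∈ Wset K 𝔭 ϖ e k (by omega) (by omega) H,
        A * B - B * A ∈ Wset K 𝔭 ϖ e (j + k - 1) (by omega) (by omega) H := by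
  obtain ⟨p, rfl⟩ : ∃ p, j = p + 2 := ⟨j - 2, by omega⟩
  obtain ⟨q, rfl⟩ : ∃ q, k = q + 2 := ⟨k - 2, by omega⟩
  rintro A ⟨htrA, n, hnH, -, Alift, hAred, hA⟩ B ⟨htrB, m, hmH, -, Blift, hBred, hB⟩
  have hπ : (Ideal.Quotient.mk (𝔭 ^ e) ϖ) ∈ Ideal.map (Ideal.Quotient.mk (𝔭 ^ e)) 𝔭 :=
    Ideal.mem_map_of_mem _ hϖ
  have e1 : p + 2 - 1 = p + 1 := by omega
  have e2 : q + 2 - 1 = q + 1 := by omega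
  have e3 : p + 2 + (q + 2) - 1 = p + q + 3 := by omega
  have e4 : p + q + 3 - 1 = (p + 1) + (q + 1) := by omega
  rw [e1] at hA
  rw [e2] at hB
  have hu : ((m : Matrix (Fin 2) (Fin 2) (NumberField.RingOfIntegers K ⧸ 𝔭 ^ e)) * (n : Matrix (Fin 2) (Fin 2) (NumberField.RingOfIntegers K ⧸ 𝔭 ^ e)))
      * (((n⁻¹ : Matrix.SpecialLinearGroup (Fin 2) (NumberField.RingOfIntegers K ⧸ 𝔭 ^ e)) : Matrix (Fin 2) (Fin 2) (NumberField.RingOfIntegers K ⧸ 𝔭 ^ e))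
        * ((m⁻¹ : Matrix.SpecialLinearGroup (Fin 2) (NumberField.RingOfIntegers K ⧸ 𝔭 ^ e)) : Matrix (Fin 2) (Fin 2) (NumberField.RingOfIntegers K ⧸ 𝔭 ^ e))) = 1 := by
    rw [← Matrix.SpecialLinearGroup.coe_mul, ← Matrix.SpecialLinearGroup.coe_mul,
      ← Matrix.SpecialLinearGroup.coe_mul,
      show (m * n) * (n⁻¹ * m⁻¹) = (1 : Matrix.SpecialLinearGroup (Fin 2) (NumberField.RingOfIntegers K ⧸ 𝔭 ^ e)) by group,
      Matrix.SpecialLinearGroup.coe_one]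
  have hkey := key_commutator (Ideal.map (Ideal.Quotient.mk (𝔭 ^ e)) 𝔭)
    (Ideal.Quotient.mk (𝔭 ^ e) ϖ) hπ (p + 1) (q + 1) (by omega) (by omega)
    (n : Matrix (Fin 2) (Fin 2) (NumberField.RingOfIntegers K ⧸ 𝔭 ^ e)) (m : Matrix (Fin 2) (Fin 2) (NumberField.RingOfIntegers K ⧸ 𝔭 ^ e))
    (((n⁻¹ : Matrix.SpecialLinearGroup (Fin 2) (NumberField.RingOfIntegers K ⧸ 𝔭 ^ e)) : Matrix (Fin 2) (Fin 2) (NumberField.RingOfIntegers K ⧸ 𝔭 ^ e))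
      * ((m⁻¹ : Matrix.SpecialLinearGroup (Fin 2) (NumberField.RingOfIntegers K ⧸ 𝔭 ^ e)) : Matrix (Fin 2) (Fin 2) (NumberField.RingOfIntegers K ⧸ 𝔭 ^ e)))
    Alift Blift hu
    (by intro a b; simpa using hA a b) (by intro a b; simpa using hB a b)
  have hc : ((n * m * n⁻¹ * m⁻¹ : Matrix.SpecialLinearGroup (Fin 2) (NumberField.RingOfIntegers K ⧸ 𝔭 ^ e)) :
      Matrix (Fin 2) (Fin 2) (NumberField.RingOfIntegers K ⧸ 𝔭 ^ e))
      = (n : Matrix (Fin 2) (Fin 2) (NumberField.RingOfIntegers K ⧸ 𝔭 ^ e)) * (m : Matrix (Fin 2) (Fin 2) (NumberField.RingOfIntegers K ⧸ 𝔭 ^ e))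
        * (((n⁻¹ : Matrix.SpecialLinearGroup (Fin 2) (NumberField.RingOfIntegers K ⧸ 𝔭 ^ e)) : Matrix (Fin 2) (Fin 2) (NumberField.RingOfIntegers K ⧸ 𝔭 ^ e))
          * ((m⁻¹ : Matrix.SpecialLinearGroup (Fin 2) (NumberField.RingOfIntegers K ⧸ 𝔭 ^ e)) : Matrix (Fin 2) (Fin 2) (NumberField.RingOfIntegers K ⧸ 𝔭 ^ e))) := by
    simp only [Matrix.SpecialLinearGroup.coe_mul, mul_assoc]
  refine ⟨?_, n * m * n⁻¹ * m⁻¹,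
    mul_mem (mul_mem (mul_mem hnH hmH) (inv_mem hnH)) (inv_mem hmH), ?_,
    Alift * Blift - Blift * Alift, ?_, ?_⟩
  · rw [Matrix.trace_sub, Matrix.trace_mul_comm, sub_self]
  · rw [red_eq_one_iff]
    intro a b
    rw [show p + 2 + (q + 2) - 1 - 1 = (p + 1) + (q + 1) from by omega]
    have h1 := hkey a b
    have h2 : (Ideal.Quotient.mk (𝔭 ^ e) ϖ) ^ ((p + 1) + (q + 1))
        * ((Alift * Blift - Blift * Alift) a b)
        ∈ (Ideal.map (Ideal.Quotient.mk (𝔭 ^ e)) 𝔭) ^ ((p + 1) + (q + 1)) :=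
      Ideal.mul_mem_right _ _ (Ideal.pow_mem_pow hπ _)
    have := add_mem (Ideal.pow_le_pow_right (Nat.le_succ _) h1) h2
    rw [hc]
    simpa using this
  · intro a b
    simp only [Matrix.sub_apply, Matrix.mul_apply, Fin.sum_univ_two, map_sub, map_add,
      map_mul, hAred, hBred]
  · intro a b
    rw [show p + 2 + (q + 2) - 1 - 1 = (p + 1) + (q + 1) from by omega,
      show p + 2 + (q + 2) - 1 = (p + 1) + (q + 1) + 1 from by omega, hc]
    exact hkey a b
end
end

section
/- Let w ∈ G_e = SL₂(O_K/𝔭^e) satisfy w ≡ I + ϖ^{j−1}Ã (mod ϖ^j) for some j ∈ {2,…,e} and some Ã ∈ M₂(R_e) whose reduction modulo ϖ is a nonzero nilpotent matrix A ∈ sl₂(F_q). Then the number of primitive column vectors v ∈ R_e² fixed by w (i.e. v ∉ 𝔭R_e² and wv = v) is at most (q − 1)·q^{e+j−2}. -/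
set_option synthInstance.maxHeartbeats 400000
set_option maxHeartbeats 1000000

noncomputable section

open Paper

section AuxNilFp

variable {O : Type*} [CommRing O] [IsDedekindDomain O]

lemma aux_div {𝔭 : Ideal O} (hprime : 𝔭.IsPrime) (hbot : 𝔭 ≠ ⊥)
    {ϖ : O} (hϖ : ϖ ∈ 𝔭) (hϖ2 : ϖ ∉ 𝔭 ^ 2)
    {x : O} {k m : ℕ} (hkm : k ≤ m) (h : ϖ ^ k * x ∈ 𝔭 ^ m) : x ∈ 𝔭 ^ (m - k) := by
  have hP : Prime 𝔭 := Ideal.prime_of_isPrime hbot hprime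
  obtain ⟨c, hc⟩ : 𝔭 ∣ Ideal.span {ϖ} := Ideal.dvd_span_singleton.mpr hϖ
  have hpc : ¬ 𝔭 ∣ c := by
    rintro ⟨d, hd⟩
    apply hϖ2
    apply Ideal.dvd_span_singleton.mp
    rw [hc, hd, ← mul_assoc, ← pow_two]
    exact Dvd.intro _ rfl
  have h1 : 𝔭 ^ m ∣ Ideal.span {ϖ ^ k * x} := Ideal.dvd_span_singleton.mpr h
  rw [← Ideal.span_singleton_mul_span_singleton, ← Ideal.span_singleton_pow, hc,
    mul_pow, mul_assoc] at h1
  rw [← Nat.add_sub_cancel' hkm, pow_add] at h1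
  have hk0 : (𝔭 : Ideal O) ^ k ≠ 0 := by
    apply pow_ne_zero
    simpa [Ideal.zero_eq_bot] using hbot
  have h2 : 𝔭 ^ (m - k) ∣ c ^ k * Ideal.span {x} := (mul_dvd_mul_iff_left hk0).mp h1
  have h3 : ¬ 𝔭 ∣ c ^ k := fun hd => hpc (hP.dvd_of_dvd_pow hd)
  exact Ideal.dvd_span_singleton.mp (hP.pow_dvd_of_dvd_mul_left _ h3 h2)

lemma aux_sup {𝔭 : Ideal O} (hprime : 𝔭.IsPrime) (hbot : 𝔭 ≠ ⊥)
    {ϖ : O} (hϖ : ϖ ∈ 𝔭) (hϖ2 : ϖ ∉ 𝔭 ^ 2) {e : ℕ} (he : e ≠ 0) :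
    Ideal.span {ϖ} ⊔ 𝔭 ^ e = 𝔭 := by
  have hP : Prime 𝔭 := Ideal.prime_of_isPrime hbot hprime
  have hIle : Ideal.span {ϖ} ⊔ 𝔭 ^ e ≤ 𝔭 :=
    sup_le ((Ideal.span_singleton_le_iff_mem 𝔭).mpr hϖ) (Ideal.pow_le_self he)
  have hIdvd : Ideal.span {ϖ} ⊔ 𝔭 ^ e ∣ 𝔭 ^ e := Ideal.dvd_iff_le.mpr le_sup_right
  obtain ⟨i, hie, hassoc⟩ := (dvd_prime_pow hP e).mp hIdvd
  have hIeq : Ideal.span {ϖ} ⊔ 𝔭 ^ e = 𝔭 ^ i := associated_iff_eq.mp hassoc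
  match i, hIeq with
  | 0, hIeq => 
    exfalso
    have h1 : 𝔭 ∣ Ideal.span {ϖ} ⊔ 𝔭 ^ e := Ideal.dvd_iff_le.mpr hIle
    rw [hIeq, pow_zero] at h1
    exact hP.not_unit (isUnit_of_dvd_one h1)
  | 1, hIeq => rw [hIeq, pow_one]
  | (i+2), hIeq =>
    exfalso
    apply hϖ2
    have h1 : ϖ ∈ Ideal.span {ϖ} ⊔ 𝔭 ^ e := Ideal.mem_sup_left (Ideal.mem_span_singleton_self ϖ)
    rw [hIeq] at h1
    exact Ideal.pow_le_pow_right (by omega) h1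

lemma aux_pow_sup {𝔭 : Ideal O} (hprime : 𝔭.IsPrime) (hbot : 𝔭 ≠ ⊥)
    {ϖ : O} (hϖ : ϖ ∈ 𝔭) (hϖ2 : ϖ ∉ 𝔭 ^ 2) {e : ℕ} (he : e ≠ 0) (k : ℕ) :
    𝔭 ^ k ≤ Ideal.span {ϖ ^ k} ⊔ 𝔭 ^ e := by
  induction k with
  | zero => simp [Ideal.span_singleton_one]
  | succ k ih =>
    calc 𝔭 ^ (k+1) = 𝔭 ^ k * 𝔭 := pow_succ 𝔭 k
    _ ≤ (Ideal.span {ϖ ^ k} ⊔ 𝔭 ^ e) * (Ideal.span {ϖ} ⊔ 𝔭 ^ e) := by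
        refine Ideal.mul_mono ih ?_
        rw [aux_sup hprime hbot hϖ hϖ2 he]
    _ ≤ Ideal.span {ϖ ^ (k+1)} ⊔ 𝔭 ^ e := by
        rw [Ideal.sup_mul, Ideal.mul_sup, Ideal.mul_sup]
        refine sup_le (sup_le ?_ ?_) (sup_le ?_ ?_)
        · rw [Ideal.span_singleton_mul_span_singleton, ← pow_succ]
          exact le_sup_left
        · exact le_trans Ideal.mul_le_right le_sup_right
        · exact le_trans Ideal.mul_le_left le_sup_right
        · exact le_trans Ideal.mul_le_right le_sup_right

lemma aux_finite [Module.Free ℤ O] [Module.Finite ℤ O] (I : Ideal O) (hI : I ≠ ⊥) :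
    Finite (O ⧸ I) := by
  refine (Ideal.absNorm_ne_zero_iff I).mp ?_
  simpa [Ne, Ideal.absNorm_eq_zero_iff] using hI

lemma aux_card_pow [Module.Free ℤ O] [Module.Finite ℤ O] (𝔭 : Ideal O) (k : ℕ) :
    Nat.card (O ⧸ 𝔭 ^ k) = Nat.card (O ⧸ 𝔭) ^ k := by
  rw [← Submodule.cardQuot_apply, ← Ideal.absNorm_apply, map_pow, Ideal.absNorm_apply,
    Submodule.cardQuot_apply]

lemma aux_unit (𝔭 : Ideal O) (hprime : 𝔭.IsPrime) (hbot : 𝔭 ≠ ⊥) (e : ℕ) (he : e ≠ 0)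
    (x : O ⧸ 𝔭 ^ e) (hx : Ideal.Quotient.factor (S := 𝔭 ^ e) (T := 𝔭) (Ideal.pow_le_self he) x ≠ 0) :
    IsUnit x := by
  haveI : 𝔭.IsMaximal := hprime.isMaximal hbot
  obtain ⟨b, hb⟩ := Ideal.Quotient.exists_inv hx
  obtain ⟨z, rfl⟩ := Ideal.Quotient.mk_surjective b
  have h1 : Ideal.Quotient.factor (S := 𝔭 ^ e) (T := 𝔭) (Ideal.pow_le_self he)
      (x * Ideal.Quotient.mk (𝔭 ^ e) z - 1) = 0 := by
    rw [map_sub, map_mul, map_one, Ideal.Quotient.factor_mk, hb, sub_self]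
  have h2 : x * Ideal.Quotient.mk (𝔭 ^ e) z - 1 ∈
      Ideal.map (Ideal.Quotient.mk (𝔭 ^ e)) 𝔭 := by
    obtain ⟨y, hy⟩ := Ideal.Quotient.mk_surjective (x * Ideal.Quotient.mk (𝔭 ^ e) z - 1)
    rw [← hy]
    apply Ideal.mem_map_of_mem
    rw [← hy, Ideal.Quotient.factor_mk] at h1
    exact Ideal.Quotient.eq_zero_iff_mem.mp h1
  have h3 : IsNilpotent (x * Ideal.Quotient.mk (𝔭 ^ e) z - 1) := by
    refine ⟨e, ?_⟩
    have h4 := Ideal.pow_mem_pow h2 e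
    rw [← Ideal.map_pow, Ideal.map_quotient_self] at h4
    exact Ideal.mem_bot.mp h4
  have h5 : IsUnit (x * Ideal.Quotient.mk (𝔭 ^ e) z) := by
    have := IsNilpotent.isUnit_add_one h3
    rwa [sub_add_cancel] at this
  exact isUnit_of_mul_isUnit_left h5

lemma aux_map_span (𝔭 : Ideal O) (hprime : 𝔭.IsPrime) (hbot : 𝔭 ≠ ⊥)
    {ϖ : O} (hϖ : ϖ ∈ 𝔭) (hϖ2 : ϖ ∉ 𝔭 ^ 2) {e : ℕ} (he : e ≠ 0) :
    Ideal.map (Ideal.Quotient.mk (𝔭 ^ e)) 𝔭 =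
      Ideal.span {Ideal.Quotient.mk (𝔭 ^ e) ϖ} := by
  calc Ideal.map (Ideal.Quotient.mk (𝔭 ^ e)) 𝔭
      = Ideal.map (Ideal.Quotient.mk (𝔭 ^ e)) (Ideal.span {ϖ} ⊔ 𝔭 ^ e) := by
        rw [aux_sup hprime hbot hϖ hϖ2 he]
    _ = Ideal.span {Ideal.Quotient.mk (𝔭 ^ e) ϖ} := by
        rw [Ideal.map_sup, Ideal.map_span, Set.image_singleton, Ideal.map_quotient_self,
          sup_bot_eq]

lemma aux_count {O : Type*} [CommRing O] [IsDedekindDomain O]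
    [Module.Free ℤ O] [Module.Finite ℤ O]
    (𝔭 : Ideal O) (hprime : 𝔭.IsPrime) (hbot : 𝔭 ≠ ⊥)
    (ϖ : O) (hϖ : ϖ ∈ 𝔭) (hϖ2 : ϖ ∉ 𝔭 ^ 2)
    (e j : ℕ) (hj : 2 ≤ j) (hje : j ≤ e)
    (c c' : Fin 2) (hcc : ∀ i : Fin 2, i = c ∨ i = c')
    (u u' : O ⧸ 𝔭 ^ e) (hu : IsUnit u) :
    Nat.card {v : Fin 2 → O ⧸ 𝔭 ^ e //
        (¬ (v 0 ∈ Ideal.map (Ideal.Quotient.mk (𝔭 ^ e)) 𝔭 ∧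
            v 1 ∈ Ideal.map (Ideal.Quotient.mk (𝔭 ^ e)) 𝔭)) ∧
        (Ideal.Quotient.mk (𝔭 ^ e) ϖ) ^ (j - 1) * (u * v c + u' * v c') = 0} ≤
      (Nat.card (O ⧸ 𝔭) - 1) * Nat.card (O ⧸ 𝔭) ^ (e + j - 2) := by
  classical
  have h𝔭0 : (𝔭 : Ideal O) ≠ 0 := by simpa [Ideal.zero_eq_bot] using hbot
  haveI : Finite (O ⧸ 𝔭 ^ e) := aux_finite _ (by simpa using pow_ne_zero e h𝔭0)
  haveI : Finite (O ⧸ 𝔭) := aux_finite _ hbot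
  haveI : Finite (O ⧸ 𝔭 ^ (j - 1)) := aux_finite _ (by simpa using pow_ne_zero (j-1) h𝔭0)
  set π := Ideal.Quotient.mk (𝔭 ^ e) with hπ
  set p : O ⧸ 𝔭 ^ e := π ϖ with hp
  set 𝔪 := Ideal.map π 𝔭 with h𝔪
  set q := Nat.card (O ⧸ 𝔭) with hq
  have hq0 : 0 < q := Nat.card_pos
  -- division
  have hdiv' : ∀ z : O ⧸ 𝔭 ^ e, p ^ (j - 1) * z = 0 →
      ∃ y : O, z = p ^ (e - (j - 1)) * π y := by
    intro z hz
    obtain ⟨zz, rfl⟩ := Ideal.Quotient.mk_surjective z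
    have h1 : ϖ ^ (j - 1) * zz ∈ 𝔭 ^ e := by
      have : π (ϖ ^ (j - 1) * zz) = 0 := by
        simpa [map_mul, map_pow] using hz
      exact Ideal.Quotient.eq_zero_iff_mem.mp this
    have h2 : zz ∈ 𝔭 ^ (e - (j - 1)) := aux_div hprime hbot hϖ hϖ2 (by omega) h1
    have h3 : zz ∈ Ideal.span {ϖ ^ (e - (j - 1))} ⊔ 𝔭 ^ e :=
      aux_pow_sup hprime hbot hϖ hϖ2 (by omega) (e - (j - 1)) h2
    obtain ⟨a, ha, b, hb, hab⟩ := Submodule.mem_sup.mp h3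
    obtain ⟨y, hy⟩ := Ideal.mem_span_singleton'.mp ha
    refine ⟨y, ?_⟩
    have h4 : π zz = π (y * ϖ ^ (e - (j - 1))) := by
      rw [Ideal.Quotient.eq]
      have : zz - y * ϖ ^ (e - (j - 1)) = b := by rw [hy, ← hab]; ring
      rwa [this]
    rw [h4, map_mul, map_pow, mul_comm]
  -- injectivity modulo 𝔭^(j-1)
  have hker : ∀ y y' : O, Ideal.Quotient.mk (𝔭 ^ (j - 1)) y = Ideal.Quotient.mk (𝔭 ^ (j - 1)) y' →
      p ^ (e - (j - 1)) * π y = p ^ (e - (j - 1)) * π y' := by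
    intro y y' h
    have h1 : y - y' ∈ 𝔭 ^ (j - 1) := Ideal.Quotient.eq.mp h
    have h2 : ϖ ^ (e - (j - 1)) * (y - y') ∈ 𝔭 ^ e := by
      have := Ideal.mul_mem_mul (Ideal.pow_mem_pow hϖ (e - (j - 1))) h1
      rwa [← pow_add, (by omega : e - (j - 1) + (j - 1) = e)] at this
    have h3 : π (ϖ ^ (e - (j - 1)) * y) = π (ϖ ^ (e - (j - 1)) * y') :=
      Ideal.Quotient.eq.mpr (by rwa [← mul_sub])
    simpa [map_mul, map_pow] using h3
  have hpk𝔪 : p ^ (e - (j - 1)) ∈ 𝔪 := by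
    have h1 : p ^ (e - (j - 1)) ∈ 𝔪 ^ (e - (j - 1)) :=
      Ideal.pow_mem_pow (Ideal.mem_map_of_mem π hϖ) _
    exact Ideal.pow_le_self (by omega) h1
  set S := {v : Fin 2 → O ⧸ 𝔭 ^ e //
        (¬ (v 0 ∈ 𝔪 ∧ v 1 ∈ 𝔪)) ∧ p ^ (j - 1) * (u * v c + u' * v c') = 0} with hS
  have hz : ∀ v : S, p ^ (j - 1) * (u * v.1 c + u' * v.1 c') = 0 := fun v => v.2.2
  have hY : ∀ v : S, u * v.1 c + u' * v.1 c' = p ^ (e - (j - 1)) * π ((hdiv' _ (hz v)).choose) :=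
    fun v => (hdiv' _ (hz v)).choose_spec
  have hnc' : ∀ v : S, v.1 c' ∉ 𝔪 := by
    intro v hvc'
    have hzmem : u * v.1 c + u' * v.1 c' ∈ 𝔪 := by
      rw [hY v]; exact Ideal.mul_mem_right _ _ hpk𝔪
    have h1 : u * v.1 c ∈ 𝔪 := by
      have h2 := Ideal.sub_mem _ hzmem (Ideal.mul_mem_left _ u' hvc')
      simpa using h2
    obtain ⟨uu, huu⟩ := hu
    have h5 : (↑uu⁻¹ : O ⧸ 𝔭 ^ e) * u = 1 := by rw [← huu, Units.inv_mul]
    have h4 : (↑uu⁻¹ : O ⧸ 𝔭 ^ e) * (u * v.1 c) = v.1 c := by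
      rw [← mul_assoc, h5, one_mul]
    have hvc : v.1 c ∈ 𝔪 := h4 ▸ Ideal.mul_mem_left _ (↑uu⁻¹ : O ⧸ 𝔭 ^ e) h1
    refine v.2.1 ⟨?_, ?_⟩
    · rcases hcc 0 with h | h <;> (cases h; assumption)
    · rcases hcc 1 with h | h <;> (cases h; assumption)
  let F : S → {x : O ⧸ 𝔭 ^ e // x ∉ 𝔪} × (O ⧸ 𝔭 ^ (j - 1)) := fun v =>
    (⟨v.1 c', hnc' v⟩, Ideal.Quotient.mk (𝔭 ^ (j - 1)) ((hdiv' _ (hz v)).choose))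
  have hF : Function.Injective F := by
    intro v₁ v₂ h
    have h1 : v₁.1 c' = v₂.1 c' := congrArg (fun t => (t.1 : O ⧸ 𝔭 ^ e)) h
    have h2 := congrArg Prod.snd h
    have hzz : u * v₁.1 c + u' * v₁.1 c' = u * v₂.1 c + u' * v₂.1 c' := by
      rw [hY v₁, hY v₂]
      exact hker _ _ h2
    have hc : v₁.1 c = v₂.1 c := by
      rw [h1] at hzz
      exact hu.mul_left_cancel (add_right_cancel hzz)
    apply Subtype.ext; funext i
    rcases hcc i with h | h <;> (cases h; assumption)
  -- cardinalities
  have hcard𝔪 : Nat.card {x : O ⧸ 𝔭 ^ e // x ∈ 𝔪} * q = q ^ e := by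
    have h := Submodule.card_quotient_mul_card_quotient 𝔭 (𝔭 ^ e) (Ideal.pow_le_self (by omega))
    rw [aux_card_pow] at h
    rw [← h, ← hq]
    congr 1
    apply Nat.card_congr
    apply Equiv.subtypeEquivRight
    intro x
    rw [h𝔪, Ideal.mem_map_iff_of_surjective _ Ideal.Quotient.mk_surjective]
    constructor
    · rintro ⟨y, hy, rfl⟩; exact ⟨y, hy, rfl⟩
    · rintro ⟨y, hy, rfl⟩; exact ⟨y, hy, rfl⟩
  have hcard𝔪' : Nat.card {x : O ⧸ 𝔭 ^ e // x ∈ 𝔪} = q ^ (e - 1) := by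
    apply Nat.eq_of_mul_eq_mul_right hq0
    rw [hcard𝔪, ← pow_succ]
    congr 1; omega
  have hcardc : Nat.card {x : O ⧸ 𝔭 ^ e // x ∉ 𝔪} = q ^ e - q ^ (e - 1) := by
    haveI := Fintype.ofFinite (O ⧸ 𝔭 ^ e)
    rw [Nat.card_eq_fintype_card, Fintype.card_subtype_compl,
      ← Nat.card_eq_fintype_card, ← Nat.card_eq_fintype_card, hcard𝔪', aux_card_pow, ← hq]
  calc Nat.card S ≤ Nat.card ({x : O ⧸ 𝔭 ^ e // x ∉ 𝔪} × (O ⧸ 𝔭 ^ (j - 1))) :=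
        Nat.card_le_card_of_injective F hF
  _ = (q ^ e - q ^ (e - 1)) * q ^ (j - 1) := by
      rw [Nat.card_prod, hcardc, aux_card_pow, ← hq]
  _ ≤ (q - 1) * q ^ (e + j - 2) := by
      have h1 : q ^ e - q ^ (e - 1) = (q - 1) * q ^ (e - 1) := by
        rw [Nat.sub_one_mul, ← pow_succ']
        congr 2; omega
      rw [h1, mul_assoc, ← pow_add]
      apply Nat.le_of_eq
      congr 2; omega

end AuxNilFp

lemma aux_main {O : Type*} [CommRing O] [IsDedekindDomain O]
    [Module.Free ℤ O] [Module.Finite ℤ O]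
    (𝔭 : Ideal O) (hprime : 𝔭.IsPrime) (hbot : 𝔭 ≠ ⊥)
    (ϖ : O) (hϖ : ϖ ∈ 𝔭) (hϖ2 : ϖ ∉ 𝔭 ^ 2)
    (e j : ℕ) (hj : 2 ≤ j) (hje : j ≤ e)
    (W : Matrix (Fin 2) (Fin 2) (O ⧸ 𝔭 ^ e))
    (Alift : Matrix (Fin 2) (Fin 2) (O ⧸ 𝔭 ^ e))
    (A : Matrix (Fin 2) (Fin 2) (O ⧸ 𝔭))
    (hA0 : A ≠ 0)
    (hle : 𝔭 ^ e ≤ 𝔭)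
    (hredA : ∀ a b, Ideal.Quotient.factor (S := 𝔭 ^ e) (T := 𝔭) hle (Alift a b) = A a b)
    (hw : ∀ a b, (W - 1) a b - (Ideal.Quotient.mk (𝔭 ^ e) ϖ) ^ (j - 1) * Alift a b ∈
        (Ideal.map (Ideal.Quotient.mk (𝔭 ^ e)) 𝔭) ^ j) :
    Nat.card {v : Fin 2 → (O ⧸ 𝔭 ^ e) //
        (¬ (v 0 ∈ Ideal.map (Ideal.Quotient.mk (𝔭 ^ e)) 𝔭 ∧
            v 1 ∈ Ideal.map (Ideal.Quotient.mk (𝔭 ^ e)) 𝔭)) ∧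
        Matrix.mulVec W v = v} ≤
      (Nat.card (O ⧸ 𝔭) - 1) * Nat.card (O ⧸ 𝔭) ^ (e + j - 2) := by
  classical
  have he0 : e ≠ 0 := by omega
  have h𝔭0 : 𝔭 ≠ 0 := by simpa [Ideal.zero_eq_bot] using hbot
  haveI : Finite (O ⧸ 𝔭 ^ e) :=
    aux_finite _ (by simpa using pow_ne_zero e h𝔭0)
  -- find a nonzero entry of A
  have hex : ∃ r k, A r k ≠ 0 := by
    by_contra h
    push_neg at h
    exact hA0 (by ext r k; simpa using h r k)
  obtain ⟨r, k, hrk⟩ := hex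
  -- the unit decomposition of row r of w - 1
  have hspan : ∀ i : Fin 2, ∃ uu : O ⧸ 𝔭 ^ e,
      ((W - 1) r i = (Ideal.Quotient.mk (𝔭 ^ e) ϖ) ^ (j - 1) * uu) ∧
      Ideal.Quotient.factor (S := 𝔭 ^ e) (T := 𝔭) (Ideal.pow_le_self he0) uu = A r i := by
    intro i
    have h1 := hw r i
    rw [aux_map_span 𝔭 hprime hbot hϖ hϖ2 he0, Ideal.span_singleton_pow,
      Ideal.mem_span_singleton'] at h1
    obtain ⟨t, ht⟩ := h1
    refine ⟨Alift r i + (Ideal.Quotient.mk (𝔭 ^ e) ϖ) * t, ?_, ?_⟩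
    · have hpj : (Ideal.Quotient.mk (𝔭 ^ e) ϖ) ^ (j - 1) * (Ideal.Quotient.mk (𝔭 ^ e) ϖ) = (Ideal.Quotient.mk (𝔭 ^ e) ϖ) ^ j := by
        rw [← pow_succ]; congr 1; omega
      have : (W - 1) r i = (Ideal.Quotient.mk (𝔭 ^ e) ϖ) ^ (j - 1) * Alift r i + t * (Ideal.Quotient.mk (𝔭 ^ e) ϖ) ^ j := by
        rw [ht]; ring
      rw [this, ← hpj]; ring
    · rw [map_add, map_mul]
      have hfp : Ideal.Quotient.factor (S := 𝔭 ^ e) (T := 𝔭) (Ideal.pow_le_self he0)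
          (Ideal.Quotient.mk (𝔭 ^ e) ϖ) = 0 := by
        rw [Ideal.Quotient.factor_mk]
        exact Ideal.Quotient.eq_zero_iff_mem.mpr hϖ
      rw [hfp, zero_mul, add_zero]
      exact hredA r i
  obtain ⟨u0, hu0, hfu0⟩ := hspan 0
  obtain ⟨u1, hu1, hfu1⟩ := hspan 1
  -- the row equation
  have heq : ∀ v : Fin 2 → O ⧸ 𝔭 ^ e, Matrix.mulVec W v = v →
      (Ideal.Quotient.mk (𝔭 ^ e) ϖ) ^ (j - 1) * (u0 * v 0 + u1 * v 1) = 0 := by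
    intro v hv
    have h0 : W r 0 * v 0 + W r 1 * v 1 = v r := by
      have := congrFun hv r
      simpa [Matrix.mulVec, dotProduct, Fin.sum_univ_two] using this
    have hone : (1 : Matrix (Fin 2) (Fin 2) (O ⧸ 𝔭 ^ e)) r 0 * v 0 +
        (1 : Matrix (Fin 2) (Fin 2) (O ⧸ 𝔭 ^ e)) r 1 * v 1 = v r := by
      fin_cases r <;> simp [Matrix.one_apply]
    have hrow : (W - 1) r 0 * v 0 + (W - 1) r 1 * v 1 = 0 := by
      simp only [Matrix.sub_apply]
      linear_combination h0 - hone
    rw [hu0, hu1] at hrow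
    linear_combination hrow
  -- case on the column of the nonzero entry
  fin_cases k
  · -- A r 0 ≠ 0 : u0 is a unit
    have hu : IsUnit u0 := aux_unit 𝔭 hprime hbot e he0 u0 (by rw [hfu0]; exact hrk)
    refine le_trans ?_ (aux_count 𝔭 hprime hbot ϖ hϖ hϖ2 e j hj hje 0 1 (by decide) u0 u1 hu)
    have : Finite {v : Fin 2 → O ⧸ 𝔭 ^ e //
        (¬ (v 0 ∈ Ideal.map (Ideal.Quotient.mk (𝔭 ^ e)) 𝔭 ∧ v 1 ∈ Ideal.map (Ideal.Quotient.mk (𝔭 ^ e)) 𝔭)) ∧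
        (Ideal.Quotient.mk (𝔭 ^ e) ϖ) ^ (j - 1) * (u0 * v 0 + u1 * v 1) = 0} := Subtype.finite
    refine Nat.card_le_card_of_injective
      (fun v => ⟨v.1, v.2.1, heq v.1 v.2.2⟩) ?_
    intro a b hab
    obtain ⟨a, ha⟩ := a
    obtain ⟨b, hb⟩ := b
    simp only [Subtype.mk.injEq] at hab
    exact Subtype.ext hab
  · -- A r 1 ≠ 0 : u1 is a unit
    have hu : IsUnit u1 := aux_unit 𝔭 hprime hbot e he0 u1 (by rw [hfu1]; exact hrk)
    refine le_trans ?_ (aux_count 𝔭 hprime hbot ϖ hϖ hϖ2 e j hj hje 1 0 (by decide) u1 u0 hu)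
    have : Finite {v : Fin 2 → O ⧸ 𝔭 ^ e //
        (¬ (v 0 ∈ Ideal.map (Ideal.Quotient.mk (𝔭 ^ e)) 𝔭 ∧ v 1 ∈ Ideal.map (Ideal.Quotient.mk (𝔭 ^ e)) 𝔭)) ∧
        (Ideal.Quotient.mk (𝔭 ^ e) ϖ) ^ (j - 1) * (u1 * v 1 + u0 * v 0) = 0} := Subtype.finite
    refine Nat.card_le_card_of_injective
      (fun v => ⟨v.1, v.2.1, by have := heq v.1 v.2.2; linear_combination this⟩) ?_
    intro a b hab
    obtain ⟨a, ha⟩ := a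
    obtain ⟨b, hb⟩ := b
    simp only [Subtype.mk.injEq] at hab
    exact Subtype.ext hab


/-- Lemma `nil-fp`.
If `w ∈ SL₂(𝓞_K/𝔭^e)` satisfies `w ≡ I + ϖ^{j-1}Ã (mod ϖ^j)` for some
`j ∈ {2,…,e}` and some `Ã` reducing mod `ϖ` to a nonzero nilpotent
`A ∈ sl₂(F_q)`, then the number of primitive fixed columns of `w` is at most
`(q-1)·q^{e+j-2}`. -/
theorem statement12 (K : Type*) [Field K] [NumberField K]
    (𝔭 : Ideal (NumberField.RingOfIntegers K)) (hprime : 𝔭.IsPrime) (hbot : 𝔭 ≠ ⊥)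
    (ϖ : NumberField.RingOfIntegers K) (hϖ : ϖ ∈ 𝔭) (hϖ2 : ϖ ∉ 𝔭 ^ 2)
    (e j : ℕ) (hj : 2 ≤ j) (hje : j ≤ e)
    (w : Matrix.SpecialLinearGroup (Fin 2) (NumberField.RingOfIntegers K ⧸ 𝔭 ^ e))
    (Alift : Matrix (Fin 2) (Fin 2) (NumberField.RingOfIntegers K ⧸ 𝔭 ^ e))
    (A : Matrix (Fin 2) (Fin 2) (NumberField.RingOfIntegers K ⧸ 𝔭))
    (htr : Matrix.trace A = 0) (hA0 : A ≠ 0) (hnil : A * A = 0)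
    (hredA : ∀ a b, Ideal.Quotient.factor (S := 𝔭 ^ e) (T := 𝔭) (Ideal.pow_le_self (by omega))
        (Alift a b) = A a b)
    (hw : ∀ a b, (w.1 - 1) a b - (Ideal.Quotient.mk (𝔭 ^ e) ϖ) ^ (j - 1) * Alift a b ∈
        (Ideal.map (Ideal.Quotient.mk (𝔭 ^ e)) 𝔭) ^ j) :
    Nat.card {v : Fin 2 → (NumberField.RingOfIntegers K ⧸ 𝔭 ^ e) //
        (¬ (v 0 ∈ Ideal.map (Ideal.Quotient.mk (𝔭 ^ e)) 𝔭 ∧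
            v 1 ∈ Ideal.map (Ideal.Quotient.mk (𝔭 ^ e)) 𝔭)) ∧
        Matrix.mulVec w.1 v = v} ≤
      (Nat.card (NumberField.RingOfIntegers K ⧸ 𝔭) - 1) *
        Nat.card (NumberField.RingOfIntegers K ⧸ 𝔭) ^ (e + j - 2) :=
  aux_main 𝔭 hprime hbot ϖ hϖ hϖ2 e j hj hje w.1 Alift A hA0
    (Ideal.pow_le_self (by omega)) hredA hw
end
end

section
/- Assume e ≥ 2. For every subgroup H ⊆ G_e = SL₂(O_K/𝔭^e), one has χ_e(H) ≤ χ_e(N₂(H)) + χ₁(H₁) − q^{−1}, where H₁ := ρ_{e,1}(H) ⊆ G₁ = SL₂(F_q) is the reduction of H modulo 𝔭 and N₂(H) := ker(ρ_{e,1}|_H). -/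
noncomputable section

section AuxSection

namespace Aux

open MulAction

variable {G : Type*} [Group G]

/-- Pairs (h,x) with h ∈ H and h fixing x in G ⧸ U. -/
abbrev Pairs (U H : Subgroup G) : Type _ :=
  {p : G × (G ⧸ U) // p.1 ∈ H ∧ p.1 • p.2 = p.2}

def pairsEquiv (U H : Subgroup G) :
    Pairs U H ≃ Σ h : H, fixedBy (G ⧸ U) h where
  toFun p := ⟨⟨p.1.1, p.2.1⟩, ⟨p.1.2, p.2.2⟩⟩
  invFun s := ⟨(s.1.1, s.2.1), s.1.2, s.2.2⟩
  left_inv p := rfl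
  right_inv s := rfl

lemma card_pairs [Finite G] (U H : Subgroup G) :
    Nat.card (Pairs U H) =
      Nat.card (Quotient (orbitRel H (G ⧸ U))) * Nat.card H := by
  classical
  letI : Fintype G := Fintype.ofFinite G
  letI : Fintype (G ⧸ U) := Fintype.ofFinite _
  letI : Fintype H := Fintype.ofFinite _
  letI : ∀ a : H, Fintype (fixedBy (G ⧸ U) a) := fun a => Fintype.ofFinite _
  letI : Fintype (orbitRel.Quotient H (G ⧸ U)) := Fintype.ofFinite _
  have hb := MulAction.sum_card_fixedBy_eq_card_orbits_mul_card_group (G := H) (X := G ⧸ U)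
  rw [Nat.card_congr (pairsEquiv U H)]
  simp only [Nat.card_eq_fintype_card, Fintype.card_sigma]
  convert hb using 2

lemma chi_formula [Finite G] (U H : Subgroup G) :
    (Nat.card (Quotient (orbitRel H (G ⧸ U))) : ℝ) / (H.index : ℝ) =
      (Nat.card (Pairs U H) : ℝ) / (Nat.card G : ℝ) := by
  have h1 := card_pairs U H
  have h2 : Nat.card H * H.index = Nat.card G := Subgroup.card_mul_index H
  have hH : (0:ℝ) < (Nat.card H : ℝ) := by
    exact_mod_cast Nat.card_pos (α := H)
  have hI : (0:ℝ) < (H.index : ℝ) := by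
    have := Subgroup.index_ne_zero_of_finite (H := H)
    positivity
  rw [← h2, h1]
  push_cast
  field_simp

variable {G' : Type*} [Group G']

/-- Induced map on coset spaces. -/
def cosetMap (φ : G →* G') (U : Subgroup G) (U' : Subgroup G') (hle : U ≤ U'.comap φ) :
    G ⧸ U → G' ⧸ U' :=
  Quotient.map' φ (fun a b h => by
    rw [QuotientGroup.leftRel_apply] at h ⊢
    simpa using hle h)

@[simp] lemma cosetMap_mk (φ : G →* G') (U : Subgroup G) (U' : Subgroup G')
    (hle : U ≤ U'.comap φ) (g : G) :
    cosetMap φ U U' hle (g : G ⧸ U) = ((φ g : G') : G' ⧸ U') := rfl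

lemma cosetMap_smul (φ : G →* G') (U : Subgroup G) (U' : Subgroup G')
    (hle : U ≤ U'.comap φ) (g : G) (x : G ⧸ U) :
    cosetMap φ U U' hle (g • x) = φ g • cosetMap φ U U' hle x := by
  induction x using QuotientGroup.induction_on with | H g' =>
  rw [MulAction.Quotient.smul_mk, cosetMap_mk, cosetMap_mk, MulAction.Quotient.smul_mk]
  simp [smul_eq_mul]

/-- The kernel acts transitively on fibers of the induced map `G⧸U → G'⧸U'`. -/
lemma ker_trans (φ : G →* G') (U : Subgroup G) (U' : Subgroup G') (hU : U.map φ = U')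
    (hle : U ≤ U'.comap φ) {x y : G ⧸ U}
    (h : cosetMap φ U U' hle x = cosetMap φ U U' hle y) :
    ∃ k ∈ φ.ker, x = k • y := by
  induction x using QuotientGroup.induction_on with | H g =>
  induction y using QuotientGroup.induction_on with | H g' =>
  rw [cosetMap_mk, cosetMap_mk, QuotientGroup.eq] at h
  rw [← hU] at h
  obtain ⟨u, hu, hu2⟩ := h
  refine ⟨g * u * g'⁻¹, ?_, ?_⟩
  · have h3 : φ u = (φ g)⁻¹ * φ g' := hu2
    simp [MonoidHom.mem_ker, h3, mul_assoc]
  · rw [MulAction.Quotient.smul_mk, QuotientGroup.eq]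
    simpa using hu

lemma key_count [Finite G] [Finite G'] (φ : G →* G') (U : Subgroup G) (U' : Subgroup G')
    (hU : U.map φ = U') (H : Subgroup G) :
    Nat.card (Pairs U H) + Nat.card φ.ker * Nat.card (G' ⧸ U') ≤
      Nat.card (Pairs U (H ⊓ φ.ker)) + Nat.card φ.ker * Nat.card (Pairs U' (H.map φ)) := by
  classical
  letI : Fintype G := Fintype.ofFinite G
  letI : Fintype G' := Fintype.ofFinite G'
  letI : Fintype (G ⧸ U) := Fintype.ofFinite _
  letI : Fintype (G' ⧸ U') := Fintype.ofFinite _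
  have hle : U ≤ U'.comap φ := by
    rw [← hU]; intro u hu; exact Subgroup.mem_comap.2 (Subgroup.mem_map_of_mem φ hu)
  set π := cosetMap φ U U' hle with hπ
  set s : Finset (G × (G ⧸ U)) :=
    Finset.univ.filter (fun p => p.1 ∈ H ∧ p.1 • p.2 = p.2) with hs
  set sk : Finset (G × (G ⧸ U)) := s.filter (fun p => p.1 ∈ φ.ker) with hsk
  set sr : Finset (G × (G ⧸ U)) := s.filter (fun p => p.1 ∉ φ.ker) with hsr
  set s' : Finset (G' × (G' ⧸ U')) :=
    Finset.univ.filter (fun q => q.1 ∈ H.map φ ∧ q.1 • q.2 = q.2) with hs'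
  set t : Finset (G' × (G' ⧸ U')) := s'.filter (fun q => q.1 ≠ 1) with ht
  have hcard1 : Nat.card (Pairs U H) = s.card := by
    rw [Nat.card_eq_fintype_card, hs]
    rw [Fintype.card_subtype]
  have hcard2 : Nat.card (Pairs U (H ⊓ φ.ker)) = sk.card := by
    rw [Nat.card_eq_fintype_card, Fintype.card_subtype, hsk, hs, Finset.filter_filter]
    congr 1
    apply Finset.filter_congr
    intro p _
    simp only [Subgroup.mem_inf, eq_iff_iff]
    tauto
  have hcard3 : Nat.card (Pairs U' (H.map φ)) = s'.card := by
    rw [Nat.card_eq_fintype_card, hs', Fintype.card_subtype]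
  have hsplit : s.card = sk.card + sr.card :=
    (Finset.card_filter_add_card_filter_not (s := s) (p := fun p : G × (G ⧸ U) => p.1 ∈ φ.ker)).symm
  have hone : (s'.filter (fun q => q.1 = 1)).card = Fintype.card (G' ⧸ U') := by
    have he : s'.filter (fun q => q.1 = 1) = Finset.univ.filter (fun q => q.1 = 1) := by
      ext ⟨a, x⟩
      simp only [hs', Finset.filter_filter, Finset.mem_filter, Finset.mem_univ, true_and]
      constructor
      · rintro ⟨-, h⟩; exact h
      · rintro rfl; exact ⟨⟨Subgroup.one_mem _, one_smul _ _⟩, rfl⟩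
    rw [he, ← Finset.card_univ]
    apply Finset.card_bij (fun q _ => q.2)
    · intro q _; exact Finset.mem_univ _
    · intro q hq q' hq' hqq
      simp only [Finset.mem_filter, Finset.mem_univ, true_and] at hq hq'
      exact Prod.ext (hq.trans hq'.symm) hqq
    · intro x _
      exact ⟨(1, x), by simp, rfl⟩
  have hsplit' : s'.card = t.card + Fintype.card (G' ⧸ U') := by
    rw [← hone, ht]
    rw [add_comm]
    exact (Finset.card_filter_add_card_filter_not (s := s') (p := fun q => q.1 = 1)).symm
  set F : G × (G ⧸ U) → G' × (G' ⧸ U') := fun p => (φ p.1, π p.2) with hF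
  have hmaps : ∀ p ∈ sr, F p ∈ t := by
    rintro ⟨h, x⟩ hp
    simp only [hsr, hs, Finset.mem_filter, Finset.mem_univ, true_and] at hp
    obtain ⟨⟨hH, hfix⟩, hker⟩ := hp
    simp only [ht, hs', hF, Finset.mem_filter, Finset.mem_univ, true_and]
    refine ⟨⟨Subgroup.mem_map_of_mem φ hH, ?_⟩, ?_⟩
    · show φ h • π x = π x
      rw [hπ, ← cosetMap_smul φ U U' hle]
      exact congrArg _ hfix
    · intro h1
      exact hker (by simpa [MonoidHom.mem_ker] using h1)
  have hfiber : ∀ q ∈ t, (sr.filter (fun p => F p = q)).card ≤ Nat.card φ.ker := by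
    intro q hq
    rcases (sr.filter (fun p => F p = q)).eq_empty_or_nonempty with hne | hne
    · simp [hne]
    obtain ⟨⟨h₀, x₀⟩, hp₀⟩ := hne
    simp only [Finset.mem_filter] at hp₀
    obtain ⟨hp₀s, hp₀F⟩ := hp₀
    have h₀fix : h₀ • x₀ = x₀ := by
      simp only [hsr, hs, Finset.mem_filter, Finset.mem_univ, true_and] at hp₀s
      exact hp₀s.1.2
    have hFh₀ : φ h₀ = q.1 := congrArg Prod.fst hp₀F
    have hFx₀ : π x₀ = q.2 := congrArg Prod.snd hp₀F
    set kk : G ⧸ U → G := fun x =>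
      if hx : ∃ k, k ∈ φ.ker ∧ x = k • x₀ then hx.choose else 1 with hkkdef
    have hkk1 : ∀ x : G ⧸ U, π x = π x₀ → kk x ∈ φ.ker ∧ x = kk x • x₀ := by
      intro x hx
      have hex : ∃ k, k ∈ φ.ker ∧ x = k • x₀ := by
        obtain ⟨k, hk1, hk2⟩ := ker_trans φ U U' hU hle hx
        exact ⟨k, hk1, hk2⟩
      rw [hkkdef]
      simp only [dif_pos hex]
      exact ⟨hex.choose_spec.1, hex.choose_spec.2⟩
    have hcardker : Nat.card φ.ker = (Finset.univ.filter (fun g : G => g ∈ φ.ker)).card := by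
      rw [Nat.card_eq_fintype_card, Fintype.card_subtype]
    rw [hcardker]
    apply Finset.card_le_card_of_injOn (fun p => p.1 * kk p.2 * h₀⁻¹)
    · rintro ⟨h, x⟩ hp
      simp only [Finset.mem_coe, Finset.mem_filter] at hp
      obtain ⟨hps, hpF⟩ := hp
      have hx : π x = π x₀ := by
        rw [hFx₀]; exact congrArg Prod.snd hpF
      obtain ⟨hkker, -⟩ := hkk1 x hx
      simp only [Finset.mem_coe, Finset.mem_filter, Finset.mem_univ, true_and, MonoidHom.mem_ker, map_mul,
        map_inv]
      rw [show φ h = q.1 from congrArg Prod.fst hpF, hkker, hFh₀]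
      group
    · rintro ⟨h, x⟩ hp ⟨h', x'⟩ hp' heq
      simp only [Finset.coe_filter, Set.mem_setOf_eq] at hp hp'
      obtain ⟨hps, hpF⟩ := hp
      obtain ⟨hps', hpF'⟩ := hp'
      have hfix : h • x = x := by
        simp only [hsr, hs, Finset.mem_filter, Finset.mem_univ, true_and] at hps
        exact hps.1.2
      have hfix' : h' • x' = x' := by
        simp only [hsr, hs, Finset.mem_filter, Finset.mem_univ, true_and] at hps'
        exact hps'.1.2
      have hx : π x = π x₀ := by rw [hFx₀]; exact congrArg Prod.snd hpF
      have hx' : π x' = π x₀ := by rw [hFx₀]; exact congrArg Prod.snd hpF'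
      have hrec : ∀ (h₁ : G) (x₁ : G ⧸ U), π x₁ = π x₀ → h₁ • x₁ = x₁ →
          (h₁ * kk x₁ * h₀⁻¹) • x₀ = x₁ := by
        intro h₁ x₁ hx₁ hfix₁
        have h₀inv : h₀⁻¹ • x₀ = x₀ := by
          rw [inv_smul_eq_iff, h₀fix]
        rw [mul_smul, mul_smul, h₀inv, ← (hkk1 x₁ hx₁).2, hfix₁]
      have heq' : h * kk x * h₀⁻¹ = h' * kk x' * h₀⁻¹ := heq
      have hx2 : x = x' := by
        rw [← hrec h x hx hfix, ← hrec h' x' hx' hfix', heq']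
      subst hx2
      have : h = h' := by
        exact mul_right_cancel (mul_right_cancel heq')
      simp [this]
  have hsr_le : sr.card ≤ Nat.card φ.ker * t.card :=
    Finset.card_le_mul_card_image_of_maps_to hmaps _ hfiber
  have hX' : Nat.card (G' ⧸ U') = Fintype.card (G' ⧸ U') := Nat.card_eq_fintype_card
  rw [hcard1, hcard2, hcard3, hX', hsplit, hsplit']
  rw [Nat.mul_add]
  omega

lemma chi_ineq [Finite G] [Finite G'] (φ : G →* G') (hsurj : Function.Surjective φ)
    (U : Subgroup G) (U' : Subgroup G') (hU : U.map φ = U') (H : Subgroup G) :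
    (Nat.card (Quotient (orbitRel H (G ⧸ U))) : ℝ) / (H.index : ℝ) ≤
      (Nat.card (Quotient (orbitRel ↥(H ⊓ φ.ker) (G ⧸ U))) : ℝ) / ((H ⊓ φ.ker).index : ℝ) +
        (Nat.card (Quotient (orbitRel ↥(H.map φ) (G' ⧸ U'))) : ℝ) / ((H.map φ).index : ℝ) -
        (Nat.card U' : ℝ)⁻¹ := by
  rw [chi_formula, chi_formula, chi_formula]
  have hg : Nat.card G = Nat.card φ.ker * Nat.card G' := by
    rw [Subgroup.card_eq_card_quotient_mul_card_subgroup (s := φ.ker),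
      Nat.card_congr (QuotientGroup.quotientKerEquivOfSurjective φ hsurj).toEquiv, mul_comm]
  have hg' : Nat.card G' = Nat.card (G' ⧸ U') * Nat.card U' :=
    Subgroup.card_eq_card_quotient_mul_card_subgroup (s := U')
  have hkpos : 0 < (Nat.card φ.ker : ℝ) := by exact_mod_cast Nat.card_pos
  have hgpos : 0 < (Nat.card G : ℝ) := by exact_mod_cast Nat.card_pos
  have hg'pos : 0 < (Nat.card G' : ℝ) := by exact_mod_cast Nat.card_pos
  have hx'pos : 0 < (Nat.card (G' ⧸ U') : ℝ) := by exact_mod_cast Nat.card_pos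
  have hu'pos : 0 < (Nat.card U' : ℝ) := by exact_mod_cast Nat.card_pos
  have h1 : (Nat.card (Pairs U H) : ℝ) + Nat.card φ.ker * Nat.card (G' ⧸ U') ≤
      (Nat.card (Pairs U (H ⊓ φ.ker)) : ℝ) + Nat.card φ.ker * Nat.card (Pairs U' (H.map φ)) := by
    exact_mod_cast key_count φ U U' hU H
  have hgr : (Nat.card G : ℝ) = Nat.card φ.ker * Nat.card G' := by exact_mod_cast hg
  have hg'r : (Nat.card G' : ℝ) = Nat.card (G' ⧸ U') * Nat.card U' := by exact_mod_cast hg'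
  have e1 : (Nat.card U' : ℝ)⁻¹ =
      (Nat.card φ.ker * Nat.card (G' ⧸ U')) / (Nat.card G : ℝ) := by
    rw [hgr, hg'r, show (Nat.card φ.ker : ℝ) * ((Nat.card (G' ⧸ U') : ℝ) * Nat.card U') =
      ((Nat.card φ.ker : ℝ) * Nat.card (G' ⧸ U')) * Nat.card U' from (mul_assoc _ _ _).symm,
      div_mul_eq_div_div, div_self (by positivity), one_div]
  have e2 : (Nat.card (Pairs U' (H.map φ)) : ℝ) / (Nat.card G' : ℝ) =
      (Nat.card φ.ker * Nat.card (Pairs U' (H.map φ))) / (Nat.card G : ℝ) := by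
    rw [hgr]
    exact (mul_div_mul_left _ _ hkpos.ne').symm
  have main : (Nat.card (Pairs U H) : ℝ) / Nat.card G + (Nat.card U' : ℝ)⁻¹ ≤
      (Nat.card (Pairs U (H ⊓ φ.ker)) : ℝ) / Nat.card G +
        (Nat.card (Pairs U' (H.map φ)) : ℝ) / Nat.card G' := by
    rw [e1, e2, ← add_div, ← add_div]
    gcongr
  linarith [main]

/-! ### Application lemmas -/

open Matrix

variable {R S : Type*} [CommRing R] [CommRing S]

/-- The element `[[1,x],[0,1]]` of `SL₂`. -/
def uelt (x : R) : SpecialLinearGroup (Fin 2) R :=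
  ⟨!![1, x; 0, 1], by simp [Matrix.det_fin_two_of]⟩

lemma uelt_mem (x : R) : uelt x ∈ Paper.unipotent R := by
  refine ⟨?_, ?_, ?_⟩ <;> simp [uelt]

/-- The unipotent subgroup is in bijection with `R`. -/
def unipotentEquiv : Paper.unipotent R ≃ R where
  toFun g := (g : SpecialLinearGroup (Fin 2) R).1 0 1
  invFun x := ⟨uelt x, uelt_mem x⟩
  left_inv g := by
    obtain ⟨⟨g, hg⟩, h1, h2, h3⟩ := g
    have h1' : g 0 0 = 1 := h1
    have h2' : g 1 0 = 0 := h2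
    have h3' : g 1 1 = 1 := h3
    apply Subtype.ext
    apply Subtype.ext
    show !![(1 : R), g 0 1; 0, 1] = g
    ext i j
    fin_cases i <;> fin_cases j <;> simp [h1', h2', h3']
  right_inv x := by
    show !![(1 : R), x; 0, 1] 0 1 = x
    simp

lemma card_unipotent : Nat.card (Paper.unipotent R) = Nat.card R :=
  Nat.card_congr unipotentEquiv

lemma slmap_coe_apply (f : R →+* S) (g : SpecialLinearGroup (Fin 2) R) (i j : Fin 2) :
    (SpecialLinearGroup.map f g).1 i j = f (g.1 i j) := rfl

/-- Surjectivity of `SL₂(R) → SL₂(S)` when `f` is surjective with nil kernel. -/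
lemma slmap_surjective (f : R →+* S) (hf : Function.Surjective f)
    (hn : ∀ a : R, f a = 0 → IsNilpotent a) :
    Function.Surjective (SpecialLinearGroup.map (n := Fin 2) f) := by
  intro A
  set B : Matrix (Fin 2) (Fin 2) R := fun i j => (hf (A.1 i j)).choose with hB
  have hBspec : ∀ i j, f (B i j) = A.1 i j := fun i j => (hf (A.1 i j)).choose_spec
  have hdet : f B.det = 1 := by
    rw [RingHom.map_det]
    have h2 : f.mapMatrix B = A.1 := by
      ext i j; exact hBspec i j
    rw [h2]
    exact A.2
  have hnil : IsNilpotent (B.det - 1) := hn _ (by rw [_root_.map_sub, hdet, _root_.map_one, sub_self])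
  have hunit : IsUnit B.det := by
    have := hnil.isUnit_add_one
    rwa [sub_add_cancel] at this
  obtain ⟨u, hu⟩ := hunit
  have hfu : f ((u⁻¹ : Rˣ) : R) = 1 := by
    have h2 : f ((u⁻¹ : Rˣ) : R) * f ((u : Rˣ) : R) = 1 := by
      rw [← _root_.map_mul, Units.inv_mul, _root_.map_one]
    rw [hu, hdet, mul_one] at h2
    exact h2
  refine ⟨⟨!![(u⁻¹ : Rˣ) * B 0 0, (u⁻¹ : Rˣ) * B 0 1; B 1 0, B 1 1], ?_⟩, ?_⟩
  · have hd : (!![((u⁻¹ : Rˣ) : R) * B 0 0, (u⁻¹ : Rˣ) * B 0 1; B 1 0, B 1 1]).det =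
        ((u⁻¹ : Rˣ) : R) * B.det := by
      rw [Matrix.det_fin_two_of, Matrix.det_fin_two]; ring
    rw [hd, ← hu, Units.inv_mul]
  · ext i j
    refine (slmap_coe_apply f _ i j).trans ?_
    fin_cases i <;> fin_cases j <;>
      simp [_root_.map_mul, hfu, hBspec]


lemma unipotent_map (f : R →+* S) (hf : Function.Surjective f) :
    (Paper.unipotent R).map (SpecialLinearGroup.map (n := Fin 2) f) = Paper.unipotent S := by
  ext g
  constructor
  · rintro ⟨u, ⟨h1, h2, h3⟩, rfl⟩
    refine ⟨?_, ?_, ?_⟩ <;>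
      rw [slmap_coe_apply] <;>
      simp only [h1, h2, h3, _root_.map_one, _root_.map_zero]
  · rintro ⟨h1, h2, h3⟩
    obtain ⟨x, hx⟩ := hf (g.1 0 1)
    refine ⟨uelt x, uelt_mem x, ?_⟩
    apply Subtype.ext
    have hmat : (SpecialLinearGroup.map f (uelt x)).1 = !![(1 : S), f x; 0, 1] := by
      ext i j
      rw [slmap_coe_apply]
      fin_cases i <;> fin_cases j
      · exact _root_.map_one f
      · rfl
      · exact _root_.map_zero f
      · exact _root_.map_one f
    show (SpecialLinearGroup.map f (uelt x)).1 = (g : Matrix (Fin 2) (Fin 2) S)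
    rw [hmat, hx]
    conv_rhs => rw [Matrix.eta_fin_two (g : Matrix (Fin 2) (Fin 2) S)]
    rw [h1, h2, h3]

section NF

variable {K : Type*} [Field K] [NumberField K] (𝔭 : Ideal (NumberField.RingOfIntegers K))

lemma pow_ne_bot (hbot : 𝔭 ≠ ⊥) (e : ℕ) (he : e ≠ 0) : 𝔭 ^ e ≠ ⊥ := by
  intro h
  obtain ⟨x, hx, hx0⟩ := Submodule.exists_mem_ne_zero_of_ne_bot hbot
  have hxe : x ^ e ∈ 𝔭 ^ e := Ideal.pow_mem_pow hx e
  rw [h, Ideal.mem_bot] at hxe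
  exact hx0 (pow_eq_zero_iff he |>.1 hxe)

lemma factor_surj (e j : ℕ) (h : j ≤ e) :
    Function.Surjective (Ideal.Quotient.factor (S := 𝔭 ^ e) (T := 𝔭 ^ j) (Ideal.pow_le_pow_right h)) := by
  intro y
  obtain ⟨x, rfl⟩ := Ideal.Quotient.mk_surjective y
  exact ⟨Ideal.Quotient.mk _ x, Ideal.Quotient.factor_mk _ x⟩

lemma factor_nil (e : ℕ) (h : 1 ≤ e) (a : NumberField.RingOfIntegers K ⧸ 𝔭 ^ e)
    (ha : Ideal.Quotient.factor (S := 𝔭 ^ e) (T := 𝔭 ^ 1) (Ideal.pow_le_pow_right h) a = 0) :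
    IsNilpotent a := by
  obtain ⟨x, rfl⟩ := Ideal.Quotient.mk_surjective a
  rw [Ideal.Quotient.factor_mk, Ideal.Quotient.eq_zero_iff_mem, pow_one] at ha
  refine ⟨e, ?_⟩
  rw [← _root_.map_pow, Ideal.Quotient.eq_zero_iff_mem]
  exact Ideal.pow_mem_pow ha e

lemma red_surj (e : ℕ) (h : 1 ≤ e) :
    Function.Surjective (Paper.red K 𝔭 e 1 h) :=
  slmap_surjective _ (factor_surj 𝔭 e 1 h) (factor_nil 𝔭 e h)

end NF
end Aux

end AuxSection


open Paper
set_option synthInstance.maxHeartbeats 1000000 in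
set_option maxHeartbeats 2000000 in
/-- Lemma `burnside-first-level-comparison`.
Assume `e ≥ 2`.  For every subgroup `H ⊆ G_e = SL₂(𝓞_K/𝔭^e)`,
`χ_e(H) ≤ χ_e(N₂(H)) + χ₁(H₁) - q⁻¹`, where `H₁ = ρ_{e,1}(H)` and
`N₂(H) = ker (ρ_{e,1}|_H)`. -/
theorem statement14 (K : Type*) [Field K] [NumberField K]
    (𝔭 : Ideal (NumberField.RingOfIntegers K)) (hprime : 𝔭.IsPrime) (hbot : 𝔭 ≠ ⊥)
    (e : ℕ) (he : 2 ≤ e)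
    (H : Subgroup (Matrix.SpecialLinearGroup (Fin 2) (NumberField.RingOfIntegers K ⧸ 𝔭 ^ e))) :
    chi (NumberField.RingOfIntegers K ⧸ 𝔭 ^ e) H ≤
      chi (NumberField.RingOfIntegers K ⧸ 𝔭 ^ e)
          (H ⊓ (red K 𝔭 e 1 (by omega)).ker) +
        chi (NumberField.RingOfIntegers K ⧸ 𝔭 ^ 1)
          (Subgroup.map (red K 𝔭 e 1 (by omega)) H) -
        (Nat.card (NumberField.RingOfIntegers K ⧸ 𝔭) : ℝ)⁻¹ := by
  letI : Fintype (NumberField.RingOfIntegers K ⧸ 𝔭 ^ e) :=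
    @Fintype.ofFinite _ (Ideal.finiteQuotientOfFreeOfNeBot _ (Aux.pow_ne_bot 𝔭 hbot e (by omega)))
  letI : Fintype (NumberField.RingOfIntegers K ⧸ 𝔭 ^ 1) :=
    @Fintype.ofFinite _ (Ideal.finiteQuotientOfFreeOfNeBot _ (Aux.pow_ne_bot 𝔭 hbot 1 (by omega)))
  letI : DecidableEq (NumberField.RingOfIntegers K ⧸ 𝔭 ^ e) := Classical.decEq _
  letI : DecidableEq (NumberField.RingOfIntegers K ⧸ 𝔭 ^ 1) := Classical.decEq _
  haveI : Finite (Matrix.SpecialLinearGroup (Fin 2)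
      (NumberField.RingOfIntegers K ⧸ 𝔭 ^ e)) := Finite.of_fintype _
  haveI : Finite (Matrix.SpecialLinearGroup (Fin 2)
      (NumberField.RingOfIntegers K ⧸ 𝔭 ^ 1)) := Finite.of_fintype _
  have hU : (Paper.unipotent (NumberField.RingOfIntegers K ⧸ 𝔭 ^ e)).map
        (red K 𝔭 e 1 (by omega)) =
      Paper.unipotent (NumberField.RingOfIntegers K ⧸ 𝔭 ^ 1) :=
    Aux.unipotent_map _ (Aux.factor_surj 𝔭 e 1 (by omega))
  have hq : Nat.card (NumberField.RingOfIntegers K ⧸ 𝔭 ^ 1) =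
      Nat.card (NumberField.RingOfIntegers K ⧸ 𝔭) :=
    Nat.card_congr (Ideal.quotEquivOfEq (pow_one 𝔭)).toEquiv
  have hmain := Aux.chi_ineq (red K 𝔭 e 1 (by omega)) (Aux.red_surj 𝔭 e (by omega))
    (Paper.unipotent _) (Paper.unipotent _) hU H
  rw [Aux.card_unipotent, hq] at hmain
  exact hmain
end
end

section
/- Let A and B be finite groups and set Q = A × B. Let U_A ⊆ A, U_B ⊆ B be subgroups and U = U_A × U_B ⊆ Q. Let H ⊆ Q be a subgroup, put H_A := {a ∈ A : (a, 1) ∈ H} and let H^B := pr_B(H) be the image of H under the projection to B. Then χ_{Q,U}(H) ≤ χ_{A,U_A}(H_A) · χ_{B,U_B}(H^B), where for a finite group G with subgroups H' and U' one defines χ_{G,U'}(H') := |H'\G/U'| / [G : H'] (the number of double cosets H'\G/U' divided by the index of H'). -/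
noncomputable section

namespace Paper

/-- `χ_{G,U}(H) = |H\G/U| / [G:H]`: the number of `(H,U)`-double cosets in `G`
divided by the index of `H`. -/
def chiDoset (G : Type*) [Group G] (U H : Subgroup G) : ℝ :=
  (Nat.card (DoubleCoset.Quotient (H : Set G) (U : Set G)) : ℝ) / (H.index : ℝ)

end Paper

open Paper

section Aux

variable {A B : Type*} [Group A] [Group B]

/-- Cardinality of the subgroup splits along the projection. -/
theorem aux_card_H [Finite A] [Finite B] (H : Subgroup (A × B)) :
    Nat.card H =
      Nat.card (H.comap (MonoidHom.inl A B)) * Nat.card (H.map (MonoidHom.snd A B)) := by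
  set φ : H →* B := (MonoidHom.snd A B).comp H.subtype with hφ
  have hrange : φ.range = H.map (MonoidHom.snd A B) := by
    ext b
    simp only [hφ, MonoidHom.mem_range, Subgroup.mem_map, MonoidHom.coe_comp,
      Function.comp_apply, MonoidHom.coe_snd, Subgroup.coe_subtype]
    constructor
    · rintro ⟨⟨x, hx⟩, rfl⟩; exact ⟨x, hx, rfl⟩
    · rintro ⟨x, h1, rfl⟩; exact ⟨⟨x, h1⟩, rfl⟩
  have hkerequiv : φ.ker ≃ H.comap (MonoidHom.inl A B) := by
    refine ⟨fun x => ⟨x.1.1.1, ?_⟩, fun a => ⟨⟨(a.1, 1), a.2⟩, ?_⟩, ?_, ?_⟩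
    · have h2 : (x.1 : A × B).2 = 1 := x.2
      have : ((x.1 : A × B).1, (1 : B)) = (x.1 : A × B) := by
        rw [← h2]
      simp [Subgroup.mem_comap, this, x.1.2]
    · simp [MonoidHom.mem_ker, hφ]
    · rintro ⟨⟨⟨a, b⟩, hab⟩, hker⟩
      have h2 : b = 1 := hker
      subst h2; rfl
    · rintro ⟨a, ha⟩; rfl
  calc Nat.card H = Nat.card (H ⧸ φ.ker) * Nat.card φ.ker :=
        Subgroup.card_eq_card_quotient_mul_card_subgroup φ.ker
    _ = Nat.card φ.range * Nat.card φ.ker := by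
        rw [Nat.card_congr (QuotientGroup.quotientKerEquivRange φ).toEquiv]
    _ = Nat.card (H.comap (MonoidHom.inl A B)) * Nat.card (H.map (MonoidHom.snd A B)) := by
        rw [hrange, Nat.card_congr hkerequiv, mul_comm]

theorem aux_index [Finite A] [Finite B] (H : Subgroup (A × B)) :
    H.index = (H.comap (MonoidHom.inl A B)).index * (H.map (MonoidHom.snd A B)).index := by
  have h1 := H.index_mul_card
  have h2 := (H.comap (MonoidHom.inl A B)).index_mul_card
  have h3 := (H.map (MonoidHom.snd A B)).index_mul_card
  have hc : Nat.card H ≠ 0 := Nat.card_pos.ne'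
  have key : H.index * Nat.card H =
      ((H.comap (MonoidHom.inl A B)).index * (H.map (MonoidHom.snd A B)).index) * Nat.card H := by
    rw [h1, aux_card_H H, Nat.card_prod]
    rw [← h2, ← h3]; ring
  exact Nat.eq_of_mul_eq_mul_right (Nat.pos_of_ne_zero hc) key

/-- The double coset counting inequality. -/
theorem aux_doset_card [Finite A] [Finite B] (UA : Subgroup A) (UB : Subgroup B)
    (H : Subgroup (A × B)) :
    Nat.card (DoubleCoset.Quotient (H : Set (A × B)) ((UA.prod UB : Subgroup (A × B)) : Set (A × B))) ≤
      Nat.card (DoubleCoset.Quotient ((H.comap (MonoidHom.inl A B) : Subgroup A) : Set A)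
          (UA : Set A)) *
        Nat.card (DoubleCoset.Quotient ((H.map (MonoidHom.snd A B) : Subgroup B) : Set B)
          (UB : Set B)) := by
  set HA := H.comap (MonoidHom.inl A B)
  set HB := H.map (MonoidHom.snd A B)
  rw [← Nat.card_prod]
  have : ∀ (β : DoubleCoset.Quotient (HB : Set B) (UB : Set B)) (a a' : A),
      DoubleCoset.setoid (HA : Set A) (UA : Set A) a a' →
      DoubleCoset.mk H (UA.prod UB) (a, β.out) = DoubleCoset.mk H (UA.prod UB) (a', β.out) := by
    intro β a a' hrel
    rw [DoubleCoset.rel_iff] at hrel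
    obtain ⟨h, hh, u, hu, rfl⟩ := hrel
    rw [DoubleCoset.eq]
    refine ⟨(h, 1), hh, (u, 1), ⟨hu, UB.one_mem⟩, ?_⟩
    simp [Prod.ext_iff]
  let F : (DoubleCoset.Quotient (HA : Set A) (UA : Set A)) × (DoubleCoset.Quotient (HB : Set B) (UB : Set B)) →
      DoubleCoset.Quotient (H : Set (A × B)) ((UA.prod UB : Subgroup (A × B)) : Set (A × B)) :=
    fun p => Quotient.liftOn' p.1 (fun a => DoubleCoset.mk H (UA.prod UB) (a, p.2.out))
      (this p.2)
  haveI : Finite (DoubleCoset.Quotient (HA : Set A) (UA : Set A)) :=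
    Quotient.finite _
  haveI : Finite (DoubleCoset.Quotient (HB : Set B) (UB : Set B)) :=
    Quotient.finite _
  apply Nat.card_le_card_of_surjective F
  intro q
  obtain ⟨⟨a, b⟩, rfl⟩ : ∃ x, DoubleCoset.mk H (UA.prod UB) x = q := ⟨q.out, DoubleCoset.out_eq' _ _ q⟩
  set β := DoubleCoset.mk HB UB b with hβ
  have hout : DoubleCoset.mk HB UB β.out = DoubleCoset.mk HB UB b := by rw [DoubleCoset.out_eq' HB UB β]
  rw [DoubleCoset.eq] at hout
  obtain ⟨hb, hhb, ub, hub, hbeq⟩ := hout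
  obtain ⟨⟨ha, hb'⟩, hmem, rfl⟩ : ∃ p ∈ H, (MonoidHom.snd A B) p = hb := hhb
  refine ⟨⟨DoubleCoset.mk HA UA (ha⁻¹ * a), β⟩, ?_⟩
  show DoubleCoset.mk H (UA.prod UB) (ha⁻¹ * a, β.out) = DoubleCoset.mk H (UA.prod UB) (a, b)
  rw [DoubleCoset.eq]
  refine ⟨(ha, hb'), hmem, (1, ub), ⟨UA.one_mem, hub⟩, ?_⟩
  have hb2 : b = hb' * β.out * ub := hbeq
  simp [Prod.ext_iff, ← hb2, mul_assoc]

end Aux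

/-- Lemma `fibre-chi-inequality`.
Let `Q = A × B` be a product of finite groups, `U = U_A × U_B`, `H ⊆ Q` a
subgroup, `H_A = {a : (a,1) ∈ H}` and `H^B = pr_B(H)`.  Then
`χ_{Q,U}(H) ≤ χ_{A,U_A}(H_A) · χ_{B,U_B}(H^B)`. -/
theorem statement18 (A B : Type*) [Group A] [Group B] [Finite A] [Finite B]
    (UA : Subgroup A) (UB : Subgroup B) (H : Subgroup (A × B)) :
    chiDoset (A × B) (UA.prod UB) H ≤
      chiDoset A UA (H.comap (MonoidHom.inl A B)) *
        chiDoset B UB (H.map (MonoidHom.snd A B)) := by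
  have hidx := aux_index H
  have hcard := aux_doset_card UA UB H
  unfold chiDoset
  rw [hidx, div_mul_div_comm]
  push_cast
  have hpos : (0 : ℝ) < ((H.comap (MonoidHom.inl A B)).index : ℝ) *
      ((H.map (MonoidHom.snd A B)).index : ℝ) := by
    have h1 := (H.comap (MonoidHom.inl A B)).index_ne_zero_of_finite
    have h2 := (H.map (MonoidHom.snd A B)).index_ne_zero_of_finite
    positivity
  exact (div_le_div_iff_of_pos_right hpos).mpr (by exact_mod_cast hcard)
end
end
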